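/- arXiv:1609.05810 — 4 statements merged into one kernel-verified Lean document; each statement's English description precedes it below -/
import Mathlib

section
/- Let 0 < λ ≤ Λ and let 1 ≤ p ≤ n be an integer. For every n×n real symmetric matrix X, the infimum of P⁻_{λ,Λ|W}(X) over all p-dimensional linear subspaces W of ℝⁿ equals the Pucci minimal operator of order p: inf_{W ∈ G_p} P⁻_{λ,Λ|W}(X) = Σ_{i=1}^p (λ·e_i(X)⁺ − Λ·e_i(X)⁻) = P⁻_{λ,Λ|p}(X), where G_p is the set (Grassmannian) of all p-dimensional linear subspaces of ℝⁿ, and the infimum is attained. -/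
open MeasureTheory Metric Filter
open scoped ENNReal

noncomputable section

/-- Matrix (in the standard basis) of the orthogonal projection of `ℝⁿ` onto a subspace `W`. -/
noncomputable def projMatrix {n : ℕ} (W : Submodule ℝ (EuclideanSpace ℝ (Fin n))) :
    Matrix (Fin n) (Fin n) ℝ :=
  LinearMap.toMatrix (EuclideanSpace.basisFun (Fin n) ℝ).toBasis
    (EuclideanSpace.basisFun (Fin n) ℝ).toBasis
    (W.subtype ∘ₗ (W.orthogonalProjection).toLinearMap)

/-- `X_W = P_W X P_W`, the compression of `X` to the subspace `W`. -/
noncomputable def restrictW {n : ℕ} (W : Submodule ℝ (EuclideanSpace ℝ (Fin n)))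
    (X : Matrix (Fin n) (Fin n) ℝ) : Matrix (Fin n) (Fin n) ℝ :=
  projMatrix W * X * projMatrix W

/-- `Tr(A⁺)`, i.e. the sum of the positive parts of the eigenvalues of a symmetric matrix `A`,
where `A = A⁺ - A⁻` is the unique decomposition with `A⁺, A⁻` positive semidefinite and
`A⁺ A⁻ = 0`. -/
noncomputable def posTrace {n : ℕ} (A : Matrix (Fin n) (Fin n) ℝ) : ℝ :=
  if h : A.IsHermitian then ∑ i, max (h.eigenvalues i) 0 else 0

/-- `Tr(A⁻)`, the sum of the negative parts of the eigenvalues of a symmetric matrix `A`. -/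
noncomputable def negTrace {n : ℕ} (A : Matrix (Fin n) (Fin n) ℝ) : ℝ :=
  if h : A.IsHermitian then ∑ i, max (-h.eigenvalues i) 0 else 0

/-- The restricted Pucci maximal operator `P⁺_{λ,Λ|W}(X) = Λ·Tr(X_W⁺) − λ·Tr(X_W⁻)`. -/
noncomputable def pucciSupW {n : ℕ} (lam Lam : ℝ) (W : Submodule ℝ (EuclideanSpace ℝ (Fin n)))
    (X : Matrix (Fin n) (Fin n) ℝ) : ℝ :=
  Lam * posTrace (restrictW W X) - lam * negTrace (restrictW W X)

/-- The restricted Pucci minimal operator `P⁻_{λ,Λ|W}(X) = λ·Tr(X_W⁺) − Λ·Tr(X_W⁻)`. -/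
noncomputable def pucciInfW {n : ℕ} (lam Lam : ℝ) (W : Submodule ℝ (EuclideanSpace ℝ (Fin n)))
    (X : Matrix (Fin n) (Fin n) ℝ) : ℝ :=
  lam * posTrace (restrictW W X) - Lam * negTrace (restrictW W X)

/-- The eigenvalues of a symmetric matrix arranged in increasing order, `0`-based:
`sortedEig X 0 = e_1(X) ≤ … ≤ sortedEig X (n-1) = e_n(X)`. -/
noncomputable def sortedEig {n : ℕ} (X : Matrix (Fin n) (Fin n) ℝ) : Fin n → ℝ :=
  if h : X.IsHermitian then h.eigenvalues ∘ (Tuple.sort h.eigenvalues) else 0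

/-- The degenerate Pucci maximal operator of order `p`:
`P⁺_{λ,Λ|p}(X) = Σ_{i=n−p+1}^n (Λ·e_i(X)⁺ − λ·e_i(X)⁻)` (sum over the `p` largest
eigenvalues). -/
noncomputable def pucciSupP {n : ℕ} (lam Lam : ℝ) (p : ℕ)
    (X : Matrix (Fin n) (Fin n) ℝ) : ℝ :=
  ∑ i ∈ Finset.univ.filter (fun i : Fin n => n - p ≤ (i : ℕ)),
    (Lam * max (sortedEig X i) 0 - lam * max (-(sortedEig X i)) 0)

/-- The degenerate Pucci minimal operator of order `p`:
`P⁻_{λ,Λ|p}(X) = Σ_{i=1}^p (λ·e_i(X)⁺ − Λ·e_i(X)⁻)` (sum over the `p` smallest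
eigenvalues). -/
noncomputable def pucciInfP {n : ℕ} (lam Lam : ℝ) (p : ℕ)
    (X : Matrix (Fin n) (Fin n) ℝ) : ℝ :=
  ∑ i ∈ Finset.univ.filter (fun i : Fin n => (i : ℕ) < p),
    (lam * max (sortedEig X i) 0 - Lam * max (-(sortedEig X i)) 0)

/-- The Hessian matrix `D²φ(x)` of a real valued function on `ℝⁿ`. -/
noncomputable def hessianMatrix {n : ℕ} (φ : EuclideanSpace ℝ (Fin n) → ℝ)
    (x : EuclideanSpace ℝ (Fin n)) : Matrix (Fin n) (Fin n) ℝ :=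
  fun i j => iteratedFDeriv ℝ 2 φ x ![EuclideanSpace.single i 1, EuclideanSpace.single j 1]

/-- `u` is a viscosity subsolution of `G(u, Du, D²u) = f(x)` in `Ω`. -/
def IsViscositySubsolution {n : ℕ} (Ω : Set (EuclideanSpace ℝ (Fin n)))
    (G : ℝ → EuclideanSpace ℝ (Fin n) → Matrix (Fin n) (Fin n) ℝ → ℝ)
    (u f : EuclideanSpace ℝ (Fin n) → ℝ) : Prop :=
  ∀ x₀ ∈ Ω, ∀ φ : EuclideanSpace ℝ (Fin n) → ℝ, ContDiff ℝ 2 φ →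
    IsLocalMaxOn (fun x => u x - φ x) Ω x₀ →
    f x₀ ≤ G (u x₀) (gradient φ x₀) (hessianMatrix φ x₀)

/-- `v` is a viscosity supersolution of `G(v, Dv, D²v) = f(x)` in `Ω`. -/
def IsViscositySupersolution {n : ℕ} (Ω : Set (EuclideanSpace ℝ (Fin n)))
    (G : ℝ → EuclideanSpace ℝ (Fin n) → Matrix (Fin n) (Fin n) ℝ → ℝ)
    (v f : EuclideanSpace ℝ (Fin n) → ℝ) : Prop :=
  ∀ x₀ ∈ Ω, ∀ φ : EuclideanSpace ℝ (Fin n) → ℝ, ContDiff ℝ 2 φ →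
    IsLocalMinOn (fun x => v x - φ x) Ω x₀ →
    G (v x₀) (gradient φ x₀) (hessianMatrix φ x₀) ≤ f x₀

-- The `α`-Riesz kernel (for sets contained in `B_d`), with value `∞` at the origin:
-- `Φ_α(x) = |x|^{−α}` for `α > 0` and `Φ_0(x) = log(2d/|x|)`.
open Classical in
noncomputable def rieszKernel {n : ℕ} (α d : ℝ) (x : EuclideanSpace ℝ (Fin n)) : ℝ≥0∞ :=
  if x = 0 then ⊤
  else ENNReal.ofReal (if α = 0 then Real.log (2 * d / ‖x‖) else ‖x‖ ^ (-α))

/-- The real valued `α`-Riesz kernel (for sets contained in `B_d`):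
`Φ_α(x) = |x|^{−α}` for `α > 0` and `Φ_0(x) = log(2d/|x|)`. -/
noncomputable def rieszKernelR {n : ℕ} (α d : ℝ) (x : EuclideanSpace ℝ (Fin n)) : ℝ :=
  if α = 0 then Real.log (2 * d / ‖x‖) else ‖x‖ ^ (-α)

/-- A set `E ⊆ ℝⁿ` has zero `α`-Riesz capacity: every Borel probability measure supported
on a compact subset of `E` has infinite `α`-energy. -/
def HasZeroRieszCapacity {n : ℕ} (α : ℝ) (E : Set (EuclideanSpace ℝ (Fin n))) : Prop :=
  ∀ K ⊆ E, IsCompact K → ∀ d > 0, K ⊆ ball (0 : EuclideanSpace ℝ (Fin n)) d →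
    ∀ μ : Measure (EuclideanSpace ℝ (Fin n)), IsProbabilityMeasure μ → μ Kᶜ = 0 →
      ∫⁻ x, ∫⁻ y, rieszKernel α d (x - y) ∂μ ∂μ = ⊤


namespace PucciAux
open Matrix

variable {n : ℕ}

lemma toEuclideanLin_projMatrix (W : Submodule ℝ (EuclideanSpace ℝ (Fin n))) :
    Matrix.toEuclideanLin (projMatrix W) = W.subtype ∘ₗ (W.orthogonalProjection).toLinearMap := by
  rw [Matrix.toEuclideanLin_eq_toLin_orthonormal, projMatrix, Matrix.toLin_toMatrix]

lemma projMatrix_mul_self (W : Submodule ℝ (EuclideanSpace ℝ (Fin n))) :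
    projMatrix W * projMatrix W = projMatrix W := by
  apply Matrix.toEuclideanLin.injective
  rw [Matrix.toEuclideanLin_eq_toLin_orthonormal,
    Matrix.toLin_mul _ (EuclideanSpace.basisFun (Fin n) ℝ).toBasis,
    ← Matrix.toEuclideanLin_eq_toLin_orthonormal, toEuclideanLin_projMatrix]
  ext x
  simp [Submodule.orthogonalProjectionOnto_mem_subspace_eq_self,
    Submodule.starProjection_eq_self_iff.mpr (W.starProjection_apply_mem x)]

lemma projMatrix_isHermitian (W : Submodule ℝ (EuclideanSpace ℝ (Fin n))) :
    (projMatrix W).IsHermitian := by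
  rw [Matrix.isHermitian_iff_isSymmetric, toEuclideanLin_projMatrix]
  intro x y
  exact Submodule.inner_starProjection_left_eq_right W x y

lemma trace_projMatrix (W : Submodule ℝ (EuclideanSpace ℝ (Fin n))) :
    (projMatrix W).trace = (Module.finrank ℝ W : ℝ) := by
  rw [projMatrix, ← LinearMap.trace_eq_matrix_trace]
  have hproj : LinearMap.IsProj W (W.subtype ∘ₗ (W.orthogonalProjection).toLinearMap) := by
    constructor
    · intro x; exact (W.orthogonalProjection x).2
    · intro x hx; exact W.starProjection_eq_self_iff.mpr hx
  exact hproj.trace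

lemma herm_PXP {P X : Matrix (Fin n) (Fin n) ℝ} (hP : P.IsHermitian) (hX : X.IsHermitian) :
    (P * X * P).IsHermitian := by
  unfold Matrix.IsHermitian at *
  rw [conjTranspose_mul, conjTranspose_mul, hP, hX, mul_assoc]

lemma conj_diag_apply (C : Matrix (Fin n) (Fin n) ℝ) (d : Fin n → ℝ) (i : Fin n) :
    (star C * Matrix.diagonal d * C) i i = ∑ k, d k * (C k i)^2 := by
  rw [mul_assoc, Matrix.mul_apply]
  congr 1; ext k
  rw [Matrix.diagonal_mul, Matrix.star_apply, star_trivial]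
  ring

lemma mul_star_self_diag (C : Matrix (Fin n) (Fin n) ℝ) (k : Fin n) :
    (C * star C) k k = ∑ i, (C k i)^2 := by
  rw [Matrix.mul_apply]
  congr 1; ext i
  rw [Matrix.star_apply, star_trivial]; ring

lemma star_mul_self_diag (C : Matrix (Fin n) (Fin n) ℝ) (i : Fin n) :
    (star C * C) i i = ∑ k, (C k i)^2 := by
  rw [Matrix.mul_apply]
  congr 1; ext k
  rw [Matrix.star_apply, star_trivial]; ring

lemma idem_diag_bounds {Q : Matrix (Fin n) (Fin n) ℝ} (hQ : Q.IsHermitian)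
    (hidem : Q * Q = Q) (i : Fin n) : 0 ≤ Q i i ∧ Q i i ≤ 1 := by
  have h1 : Q i i = ∑ k, (Q i k)^2 := by
    conv_lhs => rw [← hidem]
    rw [Matrix.mul_apply]
    congr 1; ext k
    have := hQ.apply i k
    simp only [star_trivial] at this
    rw [← this]; ring
  have h2 : (Q i i)^2 ≤ ∑ k, (Q i k)^2 :=
    Finset.single_le_sum (f := fun k => (Q i k)^2) (fun k _ => sq_nonneg _) (Finset.mem_univ i)
  have h3 : 0 ≤ ∑ k, (Q i k)^2 := Finset.sum_nonneg fun k _ => sq_nonneg _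
  constructor
  · linarith
  · nlinarith [h1, h2]

lemma conj_unitary_diag {A : Matrix (Fin n) (Fin n) ℝ} (hA : A.IsHermitian) :
    star (hA.eigenvectorUnitary : Matrix (Fin n) (Fin n) ℝ) * A * hA.eigenvectorUnitary
      = Matrix.diagonal hA.eigenvalues := by
  simpa using hA.conjStarAlgAut_star_eigenvectorUnitary

lemma spectral_real {A : Matrix (Fin n) (Fin n) ℝ} (hA : A.IsHermitian) :
    A = (hA.eigenvectorUnitary : Matrix (Fin n) (Fin n) ℝ) * Matrix.diagonal hA.eigenvalues
        * star (hA.eigenvectorUnitary : Matrix (Fin n) (Fin n) ℝ) := by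
  simpa using hA.spectral_theorem

lemma fmin_eq {lam Lam : ℝ} (hLam : lam ≤ Lam) (t : ℝ) :
    lam * max t 0 - Lam * max (-t) 0 = min (lam * t) (Lam * t) := by
  rcases le_total 0 t with ht | ht
  · rw [max_eq_left ht, max_eq_right (by linarith), min_eq_left (by nlinarith)]
    ring
  · rw [max_eq_right ht, max_eq_left (by linarith), min_eq_right (by nlinarith)]
    ring

lemma card_filter_lt (p : ℕ) (hpn : p ≤ n) :
    (Finset.univ.filter fun i : Fin n => (i : ℕ) < p).card = p := by
  have : (Finset.univ.filter fun i : Fin n => (i : ℕ) < p)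
      = Finset.univ.map (Fin.castLEEmb hpn) := by
    ext i
    simp only [Finset.mem_filter, Finset.mem_univ, true_and, Finset.mem_map,
      Fin.castLEEmb_apply]
    constructor
    · intro hi; exact ⟨⟨i, hi⟩, rfl⟩
    · rintro ⟨j, rfl⟩; exact j.2
  rw [this, Finset.card_map, Finset.card_univ, Fintype.card_fin]

lemma weighted_ge_sorted (p : ℕ) (hpn : p ≤ n) (g b : Fin n → ℝ)
    (hg : Monotone g) (hb0 : ∀ k, 0 ≤ b k) (hb1 : ∀ k, b k ≤ 1)
    (hsum : ∑ k, b k = p) (hp1 : 1 ≤ p) :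
    ∑ i ∈ Finset.univ.filter (fun i : Fin n => (i : ℕ) < p), g i ≤ ∑ k, b k * g k := by
  have hq : p - 1 < n := by omega
  set q : Fin n := ⟨p - 1, hq⟩ with hqdef
  set χ : Fin n → ℝ := fun k => if (k : ℕ) < p then 1 else 0 with hχ
  have key : 0 ≤ ∑ k, (b k - χ k) * (g k - g q) := by
    apply Finset.sum_nonneg
    intro k _
    by_cases hk : (k : ℕ) < p
    · have h1 : b k - χ k ≤ 0 := by simp [hχ, hk]; linarith [hb1 k]
      have h2 : g k - g q ≤ 0 := by
        have : k ≤ q := by rw [Fin.le_def]; simp [hqdef]; omega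
        linarith [hg this]
      nlinarith
    · have h1 : 0 ≤ b k - χ k := by simp [hχ, hk]; linarith [hb0 k]
      have h2 : 0 ≤ g k - g q := by
        have : q ≤ k := by rw [Fin.le_def]; simp [hqdef]; omega
        linarith [hg this]
      nlinarith
  have hχg : ∑ i ∈ Finset.univ.filter (fun i : Fin n => (i : ℕ) < p), g i
      = ∑ k, χ k * g k := by
    rw [Finset.sum_filter]
    apply Finset.sum_congr rfl
    intro k _
    by_cases hk : (k : ℕ) < p <;> simp [hχ, hk]
  have hχsum : ∑ k, χ k = (p : ℝ) := by
    simp only [hχ, ← Finset.sum_filter, Finset.sum_const, nsmul_eq_mul, mul_one,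
      card_filter_lt p hpn]
  have e1 : ∑ k, (b k - χ k) * (g k - g q)
      = (∑ k, b k * g k) - (∑ k, χ k * g k) - g q * ((∑ k, b k) - (∑ k, χ k)) := by
    simp only [sub_mul, mul_sub, Finset.sum_sub_distrib, ← Finset.sum_mul]
    ring
  rw [hχg]
  rw [e1, hsum, hχsum] at key
  linarith

lemma pucciInfW_eq {lam Lam : ℝ} (hLam : lam ≤ Lam)
    (W : Submodule ℝ (EuclideanSpace ℝ (Fin n))) (X : Matrix (Fin n) (Fin n) ℝ)
    (hY : (restrictW W X).IsHermitian) :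
    pucciInfW lam Lam W X = ∑ i, min (lam * hY.eigenvalues i) (Lam * hY.eigenvalues i) := by
  unfold pucciInfW posTrace negTrace
  rw [dif_pos hY, dif_pos hY, Finset.mul_sum, Finset.mul_sum, ← Finset.sum_sub_distrib]
  exact Finset.sum_congr rfl fun i _ => fmin_eq hLam _

lemma pucciInfP_eq {lam Lam : ℝ} (hLam : lam ≤ Lam) (p : ℕ)
    (X : Matrix (Fin n) (Fin n) ℝ) (hX : X.IsHermitian) :
    pucciInfP lam Lam p X = ∑ i ∈ Finset.univ.filter (fun i : Fin n => (i : ℕ) < p),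
      min (lam * hX.eigenvalues (Tuple.sort hX.eigenvalues i))
        (Lam * hX.eigenvalues (Tuple.sort hX.eigenvalues i)) := by
  unfold pucciInfP sortedEig
  simp only [dif_pos hX, Function.comp_apply]
  exact Finset.sum_congr rfl fun i _ => fmin_eq hLam _


lemma pucciInfP_le_pucciInfW {lam Lam : ℝ} (hlam : 0 ≤ lam) (hLam : lam ≤ Lam) (p : ℕ)
    (hp1 : 1 ≤ p) (hpn : p ≤ n) (X : Matrix (Fin n) (Fin n) ℝ) (hX : X.IsHermitian)
    (W : Submodule ℝ (EuclideanSpace ℝ (Fin n))) (hW : Module.finrank ℝ W = p) :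
    pucciInfP lam Lam p X ≤ pucciInfW lam Lam W X := by
  classical
  set P := projMatrix W with hPdef
  have hP : P.IsHermitian := projMatrix_isHermitian W
  have hPP : P * P = P := projMatrix_mul_self W
  have hY : (restrictW W X).IsHermitian := herm_PXP hP hX
  set V : Matrix (Fin n) (Fin n) ℝ := (hX.eigenvectorUnitary : Matrix (Fin n) (Fin n) ℝ) with hVdef
  set U : Matrix (Fin n) (Fin n) ℝ := (hY.eigenvectorUnitary : Matrix (Fin n) (Fin n) ℝ) with hUdef
  have hVV' : V * star V = 1 := Unitary.coe_mul_star_self hX.eigenvectorUnitary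
  have hUU' : U * star U = 1 := Unitary.coe_mul_star_self hY.eigenvectorUnitary
  set e := hX.eigenvalues with hedef
  set σ := hY.eigenvalues with hσdef
  set N : Matrix (Fin n) (Fin n) ℝ := star V * P * U with hN
  have hstarP : star P = P := hP
  have hstarN : star N = star U * P * V := by
    rw [hN, StarMul.star_mul, StarMul.star_mul, star_star, hstarP, mul_assoc]
  have hXs : X = V * Matrix.diagonal e * star V := spectral_real hX
  have hdiag : star N * Matrix.diagonal e * N = Matrix.diagonal σ := by
    have h2 := conj_unitary_diag hY
    calc star N * Matrix.diagonal e * N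
        = star U * P * (V * Matrix.diagonal e * star V) * (P * U) := by
          rw [hstarN, hN]; noncomm_ring
      _ = star U * (P * X * P) * U := by rw [← hXs]; noncomm_ring
      _ = Matrix.diagonal σ := h2
  have hσeq : ∀ i, σ i = ∑ k, e k * (N k i)^2 := by
    intro i
    have h3 := congrFun (congrFun hdiag i) i
    rw [conj_diag_apply] at h3
    simpa [Matrix.diagonal_apply_eq] using h3.symm
  set R : Matrix (Fin n) (Fin n) ℝ := star V * P * V with hR
  have hRherm : R.IsHermitian := by
    show star R = R
    rw [hR, StarMul.star_mul, StarMul.star_mul, star_star, hstarP, mul_assoc]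
  have hRidem : R * R = R := by
    calc R * R = star V * P * (V * star V) * (P * V) := by rw [hR]; noncomm_ring
      _ = star V * (P * P) * V := by rw [hVV']; noncomm_ring
      _ = R := by rw [hPP, hR]
  have hrow : ∀ k, (∑ i, (N k i)^2) = R k k := by
    intro k
    have h4 : N * star N = R := by
      calc N * star N = star V * P * (U * star U) * (P * V) := by
            rw [hN, hstarN]; noncomm_ring
        _ = star V * (P * P) * V := by rw [hUU']; noncomm_ring
        _ = R := by rw [hPP, hR]
    rw [← h4, mul_star_self_diag]
  have hRb : ∀ k, 0 ≤ R k k ∧ R k k ≤ 1 := fun k => idem_diag_bounds hRherm hRidem k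
  have htraceR : ∑ k, R k k = (p : ℝ) := by
    have h5 : R.trace = P.trace := by
      rw [hR, Matrix.trace_mul_cycle, hVV', one_mul]
    have h6 : ∑ k, R k k = R.trace := rfl
    rw [h6, h5, hPdef, trace_projMatrix, hW]
  -- sorting
  set τ := Tuple.sort e with hτ
  have hemono : Monotone (e ∘ τ) := Tuple.monotone_sort e
  have hcmono : Monotone (fun i => min (lam * e (τ i)) (Lam * e (τ i))) := by
    intro a b hab
    have h7 : e (τ a) ≤ e (τ b) := hemono hab
    exact min_le_min (by nlinarith) (by nlinarith)
  rw [pucciInfP_eq hLam p X hX, pucciInfW_eq hLam W X hY]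
  have step1 : ∑ i ∈ Finset.univ.filter (fun i : Fin n => (i : ℕ) < p),
      min (lam * e (τ i)) (Lam * e (τ i))
      ≤ ∑ k, R (τ k) (τ k) * min (lam * e (τ k)) (Lam * e (τ k)) := by
    apply weighted_ge_sorted p hpn _ _ hcmono (fun k => (hRb (τ k)).1) (fun k => (hRb (τ k)).2)
      _ hp1
    rw [Equiv.sum_comp τ (fun k => R k k)]
    exact htraceR
  have step2 : ∑ k, R (τ k) (τ k) * min (lam * e (τ k)) (Lam * e (τ k))
      = ∑ k, R k k * min (lam * e k) (Lam * e k) :=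
    Equiv.sum_comp τ (fun k => R k k * min (lam * e k) (Lam * e k))
  have step3 : ∑ k, R k k * min (lam * e k) (Lam * e k)
      ≤ ∑ i, min (lam * σ i) (Lam * σ i) := by
    have h8 : ∑ k, R k k * min (lam * e k) (Lam * e k)
        = ∑ i, ∑ k, (N k i)^2 * min (lam * e k) (Lam * e k) := by
      rw [Finset.sum_comm]
      apply Finset.sum_congr rfl
      intro k _
      rw [← hrow k, Finset.sum_mul]
    rw [h8]
    apply Finset.sum_le_sum
    intro i _
    apply le_min
    · calc ∑ k, (N k i)^2 * min (lam * e k) (Lam * e k)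
          ≤ ∑ k, (N k i)^2 * (lam * e k) := by
            apply Finset.sum_le_sum
            intro k _
            exact mul_le_mul_of_nonneg_left (min_le_left _ _) (sq_nonneg _)
        _ = lam * σ i := by
            rw [hσeq i, Finset.mul_sum]
            apply Finset.sum_congr rfl
            intro k _; ring
    · calc ∑ k, (N k i)^2 * min (lam * e k) (Lam * e k)
          ≤ ∑ k, (N k i)^2 * (Lam * e k) := by
            apply Finset.sum_le_sum
            intro k _
            exact mul_le_mul_of_nonneg_left (min_le_right _ _) (sq_nonneg _)
        _ = Lam * σ i := by
            rw [hσeq i, Finset.mul_sum]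
            apply Finset.sum_congr rfl
            intro k _; ring
  linarith [step1, step2, step3]

open scoped RealInnerProductSpace in
lemma orthProj_span (vb : OrthonormalBasis (Fin n) ℝ (EuclideanSpace ℝ (Fin n)))
    (s : Finset (Fin n)) (x : EuclideanSpace ℝ (Fin n)) :
    ((Submodule.span ℝ (vb '' (s : Set (Fin n)))).orthogonalProjection x
      : EuclideanSpace ℝ (Fin n)) = ∑ k ∈ s, ⟪vb k, x⟫ • vb k := by
  apply Submodule.eq_starProjection_of_mem_of_inner_eq_zero
  · exact Submodule.sum_mem _ fun k hk => Submodule.smul_mem _ _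
      (Submodule.subset_span (Set.mem_image_of_mem vb hk))
  · intro w hw
    refine Submodule.span_induction ?_ ?_ ?_ ?_ hw
    · rintro w ⟨k, hk, rfl⟩
      rw [inner_sub_left, sum_inner]
      have h1 : ∀ j ∈ s, ⟪(⟪vb j, x⟫ : ℝ) • vb j, vb k⟫ = if j = k then ⟪vb j, x⟫ else 0 := by
        intro j _
        rw [real_inner_smul_left, orthonormal_iff_ite.mp vb.orthonormal j k]
        by_cases h : j = k <;> simp [h]
      rw [Finset.sum_congr rfl h1, Finset.sum_ite_eq' s k (fun j => ⟪vb j, x⟫)]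
      rw [if_pos (Finset.mem_coe.mp hk), real_inner_comm (vb k) x]
      exact sub_self _
    · simp
    · intro a b _ _ ha hb; rw [inner_add_right, ha, hb, add_zero]
    · intro r a _ ha; rw [real_inner_smul_right, ha, mul_zero]

lemma projMatrix_span_apply (vb : OrthonormalBasis (Fin n) ℝ (EuclideanSpace ℝ (Fin n)))
    (s : Finset (Fin n)) (i j : Fin n) :
    projMatrix (Submodule.span ℝ (vb '' (s : Set (Fin n)))) i j
      = ∑ k ∈ s, vb k i * vb k j := by
  rw [projMatrix, LinearMap.toMatrix_apply]
  simp only [OrthonormalBasis.coe_toBasis, EuclideanSpace.basisFun_apply,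
    OrthonormalBasis.coe_toBasis_repr_apply, EuclideanSpace.basisFun_repr,
    LinearMap.comp_apply, Submodule.coe_subtype, ContinuousLinearMap.coe_coe]
  rw [orthProj_span vb s (EuclideanSpace.single j 1)]
  rw [WithLp.ofLp_sum, Finset.sum_apply]
  apply Finset.sum_congr rfl
  intro k hk
  rw [PiLp.smul_apply]
  rw [EuclideanSpace.inner_single_right]
  simp [mul_comm]

lemma finrank_span_orthonormal (vb : OrthonormalBasis (Fin n) ℝ (EuclideanSpace ℝ (Fin n)))
    (s : Finset (Fin n)) :
    Module.finrank ℝ (Submodule.span ℝ (vb '' (s : Set (Fin n)))) = s.card := by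
  have hon : Orthonormal ℝ (fun k : (s : Set (Fin n)) => vb k) :=
    vb.orthonormal.comp _ Subtype.val_injective
  have hli := hon.linearIndependent
  have hr : Set.range (fun k : (s : Set (Fin n)) => vb (k : Fin n)) = vb '' (s : Set (Fin n)) := by
    rw [← Set.image_eq_range]
  rw [← hr, finrank_span_eq_card hli]
  simp

lemma projMatrix_span_eq {X : Matrix (Fin n) (Fin n) ℝ} (hX : X.IsHermitian)
    (s : Finset (Fin n)) :
    projMatrix (Submodule.span ℝ (hX.eigenvectorBasis '' (s : Set (Fin n))))
      = (hX.eigenvectorUnitary : Matrix (Fin n) (Fin n) ℝ)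
        * Matrix.diagonal (fun k => if k ∈ s then (1:ℝ) else 0)
        * star (hX.eigenvectorUnitary : Matrix (Fin n) (Fin n) ℝ) := by
  ext i j
  rw [projMatrix_span_apply, mul_assoc, Matrix.mul_apply]
  have h1 : ∀ k, ((Matrix.diagonal (fun k => if k ∈ s then (1:ℝ) else 0)
      * star (hX.eigenvectorUnitary : Matrix (Fin n) (Fin n) ℝ)) k j)
      = (if k ∈ s then (1:ℝ) else 0) * (hX.eigenvectorUnitary : Matrix (Fin n) (Fin n) ℝ) j k := by
    intro k
    rw [Matrix.diagonal_mul, Matrix.star_apply, star_trivial]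
  calc ∑ k ∈ s, hX.eigenvectorBasis k i * hX.eigenvectorBasis k j
      = ∑ k, if k ∈ s then hX.eigenvectorBasis k i * hX.eigenvectorBasis k j else 0 := by
        rw [Finset.sum_ite_mem, Finset.univ_inter]
    _ = ∑ k, (hX.eigenvectorUnitary : Matrix (Fin n) (Fin n) ℝ) i k
          * ((Matrix.diagonal (fun k => if k ∈ s then (1:ℝ) else 0)
          * star (hX.eigenvectorUnitary : Matrix (Fin n) (Fin n) ℝ)) k j) := by
        apply Finset.sum_congr rfl
        intro k _
        rw [h1 k, Matrix.IsHermitian.eigenvectorUnitary_apply,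
          Matrix.IsHermitian.eigenvectorUnitary_apply]
        by_cases hk : k ∈ s <;> simp [hk, mul_comm]

lemma pucciInfW_span_le {lam Lam : ℝ} (hlam : 0 ≤ lam) (hLam : lam ≤ Lam)
    {X : Matrix (Fin n) (Fin n) ℝ} (hX : X.IsHermitian) (s : Finset (Fin n)) :
    pucciInfW lam Lam (Submodule.span ℝ (hX.eigenvectorBasis '' (s : Set (Fin n)))) X
      ≤ ∑ k ∈ s, min (lam * hX.eigenvalues k) (Lam * hX.eigenvalues k) := by
  classical
  set V : Matrix (Fin n) (Fin n) ℝ := (hX.eigenvectorUnitary : Matrix (Fin n) (Fin n) ℝ)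
    with hVdef
  have hVV : star V * V = 1 := Unitary.coe_star_mul_self hX.eigenvectorUnitary
  have hVV' : V * star V = 1 := Unitary.coe_mul_star_self hX.eigenvectorUnitary
  set e := hX.eigenvalues with hedef
  set χ : Fin n → ℝ := fun k => if k ∈ s then 1 else 0 with hχ
  set W₀ := Submodule.span ℝ (hX.eigenvectorBasis '' (s : Set (Fin n))) with hW₀
  have hPeq : projMatrix W₀ = V * Matrix.diagonal χ * star V := projMatrix_span_eq hX s
  have hP : (projMatrix W₀).IsHermitian := projMatrix_isHermitian W₀
  have hY : (restrictW W₀ X).IsHermitian := herm_PXP hP hX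
  have hXs : X = V * Matrix.diagonal e * star V := spectral_real hX
  have hYeq : restrictW W₀ X = V * Matrix.diagonal (fun k => χ k * e k) * star V := by
    have hchi : Matrix.diagonal χ * Matrix.diagonal e * Matrix.diagonal χ
        = Matrix.diagonal (fun k => χ k * e k) := by
      have h9 : ∀ k, χ k * e k * χ k = χ k * e k := by
        intro k; by_cases hk : k ∈ s <;> simp [hχ, hk]
      rw [Matrix.diagonal_mul_diagonal, Matrix.diagonal_mul_diagonal]
      exact congrArg Matrix.diagonal (funext fun k => h9 k)
    show projMatrix W₀ * X * projMatrix W₀ = _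
    rw [hPeq, hXs]
    calc (V * Matrix.diagonal χ * star V) * (V * Matrix.diagonal e * star V)
          * (V * Matrix.diagonal χ * star V)
        = V * (Matrix.diagonal χ * (star V * V) * Matrix.diagonal e * (star V * V)
            * Matrix.diagonal χ) * star V := by noncomm_ring
      _ = V * (Matrix.diagonal χ * Matrix.diagonal e * Matrix.diagonal χ) * star V := by
          rw [hVV]; noncomm_ring
      _ = _ := by rw [hchi]
  set c : Fin n → ℝ := fun k => if 0 ≤ e k then lam else Lam with hc
  have hc1 : ∀ k, lam ≤ c k := by
    intro k; by_cases hk : 0 ≤ e k <;> simp [hc, hk, hLam]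
  have hc2 : ∀ k, c k ≤ Lam := by
    intro k; by_cases hk : 0 ≤ e k <;> simp [hc, hk, hLam]
  set M : Matrix (Fin n) (Fin n) ℝ := V * Matrix.diagonal c * star V with hM
  set U : Matrix (Fin n) (Fin n) ℝ := (hY.eigenvectorUnitary : Matrix (Fin n) (Fin n) ℝ)
    with hUdef
  have hUU : star U * U = 1 := Unitary.coe_star_mul_self hY.eigenvectorUnitary
  set σ := hY.eigenvalues with hσdef
  set G : Matrix (Fin n) (Fin n) ℝ := star V * U with hG
  have hstarG : star G = star U * V := by rw [hG, StarMul.star_mul, star_star]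
  have hGG : star G * G = 1 := by
    rw [hstarG, hG]
    calc star U * V * (star V * U) = star U * (V * star V) * U := by noncomm_ring
      _ = star U * U := by rw [hVV']; noncomm_ring
      _ = 1 := hUU
  have hcol : ∀ i, ∑ k, (G k i)^2 = 1 := by
    intro i
    have h6 := congrFun (congrFun hGG i) i
    rw [star_mul_self_diag] at h6
    rw [h6, Matrix.one_apply_eq]
  have hconj : star U * M * U = star G * Matrix.diagonal c * G := by
    rw [hstarG, hG, hM]; noncomm_ring
  have hmeq : ∀ i, (star U * M * U) i i = ∑ k, c k * (G k i)^2 := by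
    intro i; rw [hconj, conj_diag_apply]
  have hml : ∀ i, lam ≤ (star U * M * U) i i := by
    intro i
    rw [hmeq i]
    calc lam = ∑ k, lam * (G k i)^2 := by
          rw [← Finset.mul_sum, hcol i, mul_one]
      _ ≤ ∑ k, c k * (G k i)^2 :=
          Finset.sum_le_sum fun k _ => mul_le_mul_of_nonneg_right (hc1 k) (sq_nonneg _)
  have hmu : ∀ i, (star U * M * U) i i ≤ Lam := by
    intro i
    rw [hmeq i]
    calc ∑ k, c k * (G k i)^2 ≤ ∑ k, Lam * (G k i)^2 :=
          Finset.sum_le_sum fun k _ => mul_le_mul_of_nonneg_right (hc2 k) (sq_nonneg _)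
      _ = Lam := by rw [← Finset.mul_sum, hcol i, mul_one]
  have hstep : ∀ i, min (lam * σ i) (Lam * σ i) ≤ (star U * M * U) i i * σ i := by
    intro i
    rcases le_total 0 (σ i) with h | h
    · exact le_trans (min_le_left _ _) (mul_le_mul_of_nonneg_right (hml i) h)
    · exact le_trans (min_le_right _ _) (mul_le_mul_of_nonpos_right (hmu i) h)
  have htr : ∑ i, (star U * M * U) i i * σ i = ∑ k, c k * (χ k * e k) := by
    have t1 : ∀ i, (star U * M * U) i i * σ i
        = ((star U * M * U) * Matrix.diagonal σ) i i := by
      intro i; rw [Matrix.mul_diagonal]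
    rw [Finset.sum_congr rfl (fun i _ => t1 i)]
    have t2 : ∑ i, ((star U * M * U) * Matrix.diagonal σ) i i
        = Matrix.trace ((star U * M * U) * Matrix.diagonal σ) := rfl
    rw [t2]
    have t3 : (star U * M * U) * Matrix.diagonal σ
        = star U * (M * (U * Matrix.diagonal σ)) := by noncomm_ring
    rw [t3, Matrix.trace_mul_comm]
    have t4 : M * (U * Matrix.diagonal σ) * star U
        = M * (U * Matrix.diagonal σ * star U) := by noncomm_ring
    have t5 : U * Matrix.diagonal σ * star U = restrictW W₀ X := by
      rw [hUdef, hσdef]; exact (spectral_real hY).symm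
    rw [t4, t5, hYeq, hM]
    have t6 : V * Matrix.diagonal c * star V * (V * Matrix.diagonal (fun k => χ k * e k) * star V)
        = V * (Matrix.diagonal c * (star V * V) * Matrix.diagonal (fun k => χ k * e k)) * star V := by
      noncomm_ring
    rw [t6, hVV]
    have t7 : V * (Matrix.diagonal c * 1 * Matrix.diagonal (fun k => χ k * e k)) * star V
        = V * (Matrix.diagonal c * Matrix.diagonal (fun k => χ k * e k)) * star V := by
      rw [mul_one]
    rw [t7, Matrix.diagonal_mul_diagonal, Matrix.trace_mul_cycle, hVV, one_mul,
      Matrix.trace_diagonal]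
  have hfinal : ∑ k, c k * (χ k * e k) = ∑ k ∈ s, min (lam * e k) (Lam * e k) := by
    have t8 : ∀ k, c k * (χ k * e k) = if k ∈ s then min (lam * e k) (Lam * e k) else 0 := by
      intro k
      by_cases hk : k ∈ s
      · have h0 : χ k = 1 := by rw [hχ]; simp [hk]
        rcases le_or_gt 0 (e k) with he | he
        · have hck : c k = lam := by rw [hc]; simp [he]
          rw [h0, hck, if_pos hk, min_eq_left (by nlinarith)]; ring
        · have hck : c k = Lam := by rw [hc]; simp [he.not_ge]
          rw [h0, hck, if_pos hk, min_eq_right (by nlinarith)]; ring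
      · simp [hχ, hk]
    rw [Finset.sum_congr rfl (fun k _ => t8 k), Finset.sum_ite_mem, Finset.univ_inter]
  rw [pucciInfW_eq hLam W₀ X hY]
  calc ∑ i, min (lam * hY.eigenvalues i) (Lam * hY.eigenvalues i)
      ≤ ∑ i, (star U * M * U) i i * σ i := Finset.sum_le_sum fun i _ => hstep i
    _ = ∑ k ∈ s, min (lam * e k) (Lam * e k) := by rw [htr, hfinal]

end PucciAux

/-- the Pucci minimal operator of order `p` is the (attained) infimum of the
restricted Pucci minimal operators over the Grassmannian of `p`-dimensional subspaces. -/
theorem pucci_order_inf_representation (n : ℕ) (lam Lam : ℝ)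
    (hlam : 0 < lam) (hLam : lam ≤ Lam) (p : ℕ) (hp1 : 1 ≤ p) (hpn : p ≤ n)
    (X : Matrix (Fin n) (Fin n) ℝ) (hX : X.IsHermitian) :
    IsLeast {r : ℝ | ∃ W : Submodule ℝ (EuclideanSpace ℝ (Fin n)),
        Module.finrank ℝ W = p ∧ r = pucciInfW lam Lam W X}
      (pucciInfP lam Lam p X) ∧
    pucciInfP lam Lam p X =
      ∑ i ∈ Finset.univ.filter (fun i : Fin n => (i : ℕ) < p),
        (lam * max (sortedEig X i) 0 - Lam * max (-(sortedEig X i)) 0) := by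
  classical
  have hlb : ∀ W : Submodule ℝ (EuclideanSpace ℝ (Fin n)), Module.finrank ℝ W = p →
      pucciInfP lam Lam p X ≤ pucciInfW lam Lam W X :=
    fun W hW => PucciAux.pucciInfP_le_pucciInfW hlam.le hLam p hp1 hpn X hX W hW
  set τ := Tuple.sort hX.eigenvalues with hτ
  set s : Finset (Fin n) := (Finset.univ.filter fun i : Fin n => (i : ℕ) < p).image τ with hs
  have hcard : s.card = p := by
    rw [hs, Finset.card_image_of_injective _ τ.injective, PucciAux.card_filter_lt p hpn]
  have hrank : Module.finrank ℝ
      (Submodule.span ℝ (hX.eigenvectorBasis '' (s : Set (Fin n)))) = p := by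
    rw [PucciAux.finrank_span_orthonormal, hcard]
  have hub : pucciInfW lam Lam (Submodule.span ℝ (hX.eigenvectorBasis '' (s : Set (Fin n)))) X
      ≤ pucciInfP lam Lam p X := by
    refine le_trans (PucciAux.pucciInfW_span_le hlam.le hLam hX s) ?_
    rw [hs, Finset.sum_image (fun x _ y _ h => τ.injective h)]
    rw [PucciAux.pucciInfP_eq hLam p X hX]
  have heq : pucciInfP lam Lam p X
      = pucciInfW lam Lam (Submodule.span ℝ (hX.eigenvectorBasis '' (s : Set (Fin n)))) X :=
    le_antisymm (hlb _ hrank) hub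
  refine ⟨⟨⟨_, hrank, heq⟩, ?_⟩, rfl⟩
  rintro r ⟨W, hW, rfl⟩
  exact hlb W hW


end
end

section
/- Let 0 < λ ≤ Λ and let 1 ≤ p ≤ n be an integer. For every n×n real symmetric matrix X the following chain of inequalities holds: P⁻_{(n/p)λ,(n/p)Λ|p}(X) ≤ M⁻_{λ,Λ}(X) ≤ M⁺_{λ,Λ}(X) ≤ P⁺_{(n/p)λ,(n/p)Λ|p}(X), where M⁺_{λ,Λ}(X) = Σ_{i=1}^n (Λ·e_i(X)⁺ − λ·e_i(X)⁻) and M⁻_{λ,Λ}(X) = Σ_{i=1}^n (λ·e_i(X)⁺ − Λ·e_i(X)⁻) are the standard Pucci extremal operators. -/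
open MeasureTheory Metric Filter
open scoped ENNReal

noncomputable section

lemma card_lt_p (n p : ℕ) (hpn : p ≤ n) :
    (Finset.univ.filter (fun i : Fin n => (i : ℕ) < p)).card = p := by
  conv_rhs => rw [← Finset.card_range p]
  apply Finset.card_nbij (fun i : Fin n => (i : ℕ))
  · intro i hi; simp at hi ⊢; exact hi
  · intro a _ b _ hab; exact Fin.val_injective hab
  · intro a ha; simp at ha ⊢; exact ⟨⟨a, lt_of_lt_of_le ha hpn⟩, ha, rfl⟩

lemma card_not_lt_p (n p : ℕ) (hpn : p ≤ n) :
    (Finset.univ.filter (fun i : Fin n => ¬ (i : ℕ) < p)).card = n - p := by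
  have h := Finset.card_filter_add_card_filter_not (s := (Finset.univ : Finset (Fin n)))
    (p := fun i : Fin n => (i : ℕ) < p)
  rw [card_lt_p n p hpn, Finset.card_univ, Fintype.card_fin] at h
  omega

lemma card_ge_np (n p : ℕ) (hpn : p ≤ n) :
    (Finset.univ.filter (fun i : Fin n => n - p ≤ (i : ℕ))).card = p := by
  have h2 : (Finset.univ.filter (fun i : Fin n => ¬ (i : ℕ) < n - p)) =
      (Finset.univ.filter (fun i : Fin n => n - p ≤ (i : ℕ))) := by
    apply Finset.filter_congr; intro i _; simp [not_lt]
  rw [← h2, card_not_lt_p n (n - p) (Nat.sub_le n p)]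
  omega

lemma card_not_ge_np (n p : ℕ) (hpn : p ≤ n) :
    (Finset.univ.filter (fun i : Fin n => ¬ (n - p ≤ (i : ℕ)))).card = n - p := by
  have h := Finset.card_filter_add_card_filter_not (s := (Finset.univ : Finset (Fin n)))
    (p := fun i : Fin n => n - p ≤ (i : ℕ))
  rw [card_ge_np n p hpn, Finset.card_univ, Fintype.card_fin] at h
  omega

lemma antitone_first (n p : ℕ) (hp1 : 1 ≤ p) (hpn : p ≤ n) (g : Fin n → ℝ) (hg : Antitone g) :
    (p : ℝ) * ∑ i, g i ≤
      (n : ℝ) * ∑ i ∈ Finset.univ.filter (fun i : Fin n => (i : ℕ) < p), g i := by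
  have hn : 1 ≤ n := le_trans hp1 hpn
  have hsplit : ∑ i, g i =
      (∑ i ∈ Finset.univ.filter (fun i : Fin n => (i : ℕ) < p), g i) +
      ∑ i ∈ Finset.univ.filter (fun i : Fin n => ¬ (i : ℕ) < p), g i :=
    (Finset.sum_filter_add_sum_filter_not _ _ _).symm
  have hb2 : ∑ i ∈ Finset.univ.filter (fun i : Fin n => ¬ (i : ℕ) < p), g i ≤
      ((n - p : ℕ) : ℝ) * g ⟨p - 1, by omega⟩ := by
    have := Finset.sum_le_card_nsmul (Finset.univ.filter (fun i : Fin n => ¬ (i : ℕ) < p)) g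
      (g ⟨p - 1, by omega⟩) (by
        intro i hi; simp only [Finset.mem_filter, not_lt] at hi
        exact hg (by rw [Fin.le_def]; simp; omega))
    rwa [card_not_lt_p n p hpn, nsmul_eq_mul] at this
  have hb1 : ((p : ℕ) : ℝ) * g ⟨p - 1, by omega⟩ ≤
      ∑ i ∈ Finset.univ.filter (fun i : Fin n => (i : ℕ) < p), g i := by
    have := Finset.card_nsmul_le_sum (Finset.univ.filter (fun i : Fin n => (i : ℕ) < p)) g
      (g ⟨p - 1, by omega⟩) (by
        intro i hi; simp only [Finset.mem_filter] at hi
        exact hg (by rw [Fin.le_def]; simp; omega))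
    rwa [card_lt_p n p hpn, nsmul_eq_mul] at this
  have hnp : ((n - p : ℕ) : ℝ) = (n : ℝ) - p := by
    push_cast [Nat.cast_sub hpn]; ring
  rw [hnp] at hb2
  rw [hsplit]
  have hppos : (0 : ℝ) < p := by exact_mod_cast hp1
  have hnpge : (0 : ℝ) ≤ (n : ℝ) - p := by
    have : (p : ℝ) ≤ n := by exact_mod_cast hpn
    linarith
  nlinarith [mul_le_mul_of_nonneg_left hb2 hppos.le, mul_le_mul_of_nonneg_left hb1 hnpge]

lemma antitone_last (n p : ℕ) (hp1 : 1 ≤ p) (hpn : p ≤ n) (g : Fin n → ℝ) (hg : Antitone g) :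
    (n : ℝ) * ∑ i ∈ Finset.univ.filter (fun i : Fin n => n - p ≤ (i : ℕ)), g i ≤
      (p : ℝ) * ∑ i, g i := by
  have hn : 1 ≤ n := le_trans hp1 hpn
  have hsplit : ∑ i, g i =
      (∑ i ∈ Finset.univ.filter (fun i : Fin n => n - p ≤ (i : ℕ)), g i) +
      ∑ i ∈ Finset.univ.filter (fun i : Fin n => ¬ (n - p ≤ (i : ℕ))), g i :=
    (Finset.sum_filter_add_sum_filter_not _ _ _).symm
  have hb1 : ∑ i ∈ Finset.univ.filter (fun i : Fin n => n - p ≤ (i : ℕ)), g i ≤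
      ((p : ℕ) : ℝ) * g ⟨n - p, by omega⟩ := by
    have := Finset.sum_le_card_nsmul (Finset.univ.filter (fun i : Fin n => n - p ≤ (i : ℕ))) g
      (g ⟨n - p, by omega⟩) (by
        intro i hi; simp only [Finset.mem_filter] at hi
        exact hg (by rw [Fin.le_def]; simp; omega))
    rwa [card_ge_np n p hpn, nsmul_eq_mul] at this
  have hb2 : ((n - p : ℕ) : ℝ) * g ⟨n - p, by omega⟩ ≤
      ∑ i ∈ Finset.univ.filter (fun i : Fin n => ¬ (n - p ≤ (i : ℕ))), g i := by
    have := Finset.card_nsmul_le_sum (Finset.univ.filter (fun i : Fin n => ¬ (n - p ≤ (i : ℕ)))) g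
      (g ⟨n - p, by omega⟩) (by
        intro i hi; simp only [Finset.mem_filter, not_le] at hi
        exact hg (by rw [Fin.le_def]; simp; omega))
    rwa [card_not_ge_np n p hpn, nsmul_eq_mul] at this
  have hnp : ((n - p : ℕ) : ℝ) = (n : ℝ) - p := by
    push_cast [Nat.cast_sub hpn]; ring
  rw [hnp] at hb2
  rw [hsplit]
  have hppos : (0 : ℝ) < p := by exact_mod_cast hp1
  have hnpge : (0 : ℝ) ≤ (n : ℝ) - p := by
    have : (p : ℝ) ≤ n := by exact_mod_cast hpn
    linarith
  nlinarith [mul_le_mul_of_nonneg_left hb1 hppos.le, mul_le_mul_of_nonneg_left hb2 hnpge]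

lemma monotone_first (n p : ℕ) (hp1 : 1 ≤ p) (hpn : p ≤ n) (g : Fin n → ℝ) (hg : Monotone g) :
    (n : ℝ) * ∑ i ∈ Finset.univ.filter (fun i : Fin n => (i : ℕ) < p), g i ≤
      (p : ℝ) * ∑ i, g i := by
  have h := antitone_first n p hp1 hpn (fun i => -g i) hg.neg
  simp only [Finset.sum_neg_distrib, mul_neg] at h
  linarith

lemma monotone_last (n p : ℕ) (hp1 : 1 ≤ p) (hpn : p ≤ n) (g : Fin n → ℝ) (hg : Monotone g) :
    (p : ℝ) * ∑ i, g i ≤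
      (n : ℝ) * ∑ i ∈ Finset.univ.filter (fun i : Fin n => n - p ≤ (i : ℕ)), g i := by
  have h := antitone_last n p hp1 hpn (fun i => -g i) hg.neg
  simp only [Finset.sum_neg_distrib, mul_neg] at h
  linarith


/-- the standard Pucci extremal operators are included between the degenerate
Pucci operators of order `p` with ellipticity constants `(n/p)λ, (n/p)Λ`. -/
theorem pucci_inclusions (n : ℕ) (lam Lam : ℝ) (hlam : 0 < lam) (hLam : lam ≤ Lam)
    (p : ℕ) (hp1 : 1 ≤ p) (hpn : p ≤ n) (X : Matrix (Fin n) (Fin n) ℝ) (hX : X.IsHermitian) :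
    pucciInfP ((n : ℝ) / (p : ℝ) * lam) ((n : ℝ) / (p : ℝ) * Lam) p X ≤
        ∑ i : Fin n, (lam * max (sortedEig X i) 0 - Lam * max (-(sortedEig X i)) 0) ∧
    (∑ i : Fin n, (lam * max (sortedEig X i) 0 - Lam * max (-(sortedEig X i)) 0)) ≤
        ∑ i : Fin n, (Lam * max (sortedEig X i) 0 - lam * max (-(sortedEig X i)) 0) ∧
    (∑ i : Fin n, (Lam * max (sortedEig X i) 0 - lam * max (-(sortedEig X i)) 0)) ≤
        pucciSupP ((n : ℝ) / (p : ℝ) * lam) ((n : ℝ) / (p : ℝ) * Lam) p X := by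
  have hLampos : 0 < Lam := lt_of_lt_of_le hlam hLam
  have hppos : (0 : ℝ) < p := by exact_mod_cast hp1
  have hmono : Monotone (sortedEig X) := by
    rw [sortedEig, dif_pos hX]
    exact Tuple.monotone_sort hX.eigenvalues
  have hgpm : Monotone (fun i => max (sortedEig X i) 0) := hmono.max monotone_const
  have hgma : Antitone (fun i => max (-(sortedEig X i)) 0) := hmono.neg.max antitone_const
  have hsum : ∀ (s : Finset (Fin n)) (a b : ℝ),
      ∑ i ∈ s, (a * max (sortedEig X i) 0 - b * max (-(sortedEig X i)) 0) =
        a * ∑ i ∈ s, max (sortedEig X i) 0 - b * ∑ i ∈ s, max (-(sortedEig X i)) 0 := by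
    intro s a b
    rw [Finset.sum_sub_distrib, Finset.mul_sum, Finset.mul_sum]
  have h1 : (n : ℝ) / p *
      ∑ i ∈ Finset.univ.filter (fun i : Fin n => (i : ℕ) < p), max (sortedEig X i) 0 ≤
      ∑ i, max (sortedEig X i) 0 := by
    have h := monotone_first n p hp1 hpn _ hgpm
    rw [div_mul_eq_mul_div, div_le_iff₀ hppos]
    linarith
  have h2 : ∑ i, max (-(sortedEig X i)) 0 ≤ (n : ℝ) / p *
      ∑ i ∈ Finset.univ.filter (fun i : Fin n => (i : ℕ) < p), max (-(sortedEig X i)) 0 := by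
    have h := antitone_first n p hp1 hpn _ hgma
    rw [div_mul_eq_mul_div, le_div_iff₀ hppos]
    linarith
  have h3 : ∑ i, max (sortedEig X i) 0 ≤ (n : ℝ) / p *
      ∑ i ∈ Finset.univ.filter (fun i : Fin n => n - p ≤ (i : ℕ)), max (sortedEig X i) 0 := by
    have h := monotone_last n p hp1 hpn _ hgpm
    rw [div_mul_eq_mul_div, le_div_iff₀ hppos]
    linarith
  have h4 : (n : ℝ) / p *
      ∑ i ∈ Finset.univ.filter (fun i : Fin n => n - p ≤ (i : ℕ)), max (-(sortedEig X i)) 0 ≤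
      ∑ i, max (-(sortedEig X i)) 0 := by
    have h := antitone_last n p hp1 hpn _ hgma
    rw [div_mul_eq_mul_div, div_le_iff₀ hppos]
    linarith
  refine ⟨?_, ?_, ?_⟩
  · rw [pucciInfP, hsum, hsum]
    nlinarith [mul_le_mul_of_nonneg_left h1 hlam.le, mul_le_mul_of_nonneg_left h2 hLampos.le]
  · apply Finset.sum_le_sum
    intro i _
    have a1 : (0:ℝ) ≤ max (sortedEig X i) 0 := le_max_right _ _
    have a2 : (0:ℝ) ≤ max (-(sortedEig X i)) 0 := le_max_right _ _
    nlinarith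
  · rw [pucciSupP, hsum, hsum]
    nlinarith [mul_le_mul_of_nonneg_left h3 hLampos.le, mul_le_mul_of_nonneg_left h4 hlam.le]

end
end

section
/- Let 0 < λ ≤ Λ, let 2 ≤ p ≤ n be an integer, and set α* = (λ/Λ)(p−1) − 1. If α* > 0, then the function Φ(x) = |x|^{−α*} is twice differentiable on ℝⁿ∖{0} and satisfies P⁺_{λ,Λ|p}(D²Φ(x)) = 0 for every x ≠ 0. If α* = 0, then for every R > 0 the function Φ(x) = log(R/|x|) is twice differentiable on the punctured ball {0 < |x| < R}, is positive there, and satisfies P⁺_{λ,Λ|p}(D²Φ(x)) = 0 for every x with 0 < |x| < R. (These are the fundamental solutions of the degenerate Pucci maximal equation.) -/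
open MeasureTheory Metric Filter
open scoped ENNReal

noncomputable section

lemma hessian_radial_entry {n : ℕ} (f f' f'' : ℝ → ℝ)
    (hf1 : ∀ t, 0 < t → HasDerivAt f (f' t) t)
    (hf2 : ∀ t, 0 < t → HasDerivAt f' (f'' t) t)
    (φ : EuclideanSpace ℝ (Fin n) → ℝ) (x : EuclideanSpace ℝ (Fin n)) (hx : x ≠ 0)
    (hφ : φ =ᶠ[nhds x] fun y => f (‖y‖ ^ 2)) (i j : Fin n) :
    hessianMatrix φ x i j =
      4 * f'' (‖x‖ ^ 2) * x i * x j + (if i = j then 2 * f' (‖x‖ ^ 2) else 0) := by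
  classical
  have hQ : ∀ y : EuclideanSpace ℝ (Fin n), y ≠ 0 → (0:ℝ) < ‖y‖ ^ 2 := fun y hy =>
    pow_pos (norm_pos_iff.mpr hy) 2
  have hq : ∀ y : EuclideanSpace ℝ (Fin n),
      HasFDerivAt (fun z : EuclideanSpace ℝ (Fin n) => ‖z‖ ^ 2) (2 • (innerSL ℝ y)) y :=
    fun y => (hasStrictFDerivAt_norm_sq y).hasFDerivAt
  have hDψ : ∀ y : EuclideanSpace ℝ (Fin n), y ≠ 0 →
      HasFDerivAt (fun y : EuclideanSpace ℝ (Fin n) => f (‖y‖ ^ 2))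
        (f' (‖y‖ ^ 2) • (2 • (innerSL ℝ y))) y := by
    intro y hy
    exact (hf1 _ (hQ y hy)).comp_hasFDerivAt y (hq y)
  have hne : ∀ᶠ y in nhds x, y ≠ (0 : EuclideanSpace ℝ (Fin n)) := eventually_ne_nhds hx
  have hfd : ∀ᶠ y in nhds x,
      fderiv ℝ (fun y : EuclideanSpace ℝ (Fin n) => f (‖y‖ ^ 2)) y
        = f' (‖y‖ ^ 2) • (2 • (innerSL ℝ y)) :=
    hne.mono fun y hy => (hDψ y hy).fderiv
  have hG : (fderiv ℝ (fun y : EuclideanSpace ℝ (Fin n) => f (‖y‖ ^ 2))) =ᶠ[nhds x]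
      (fun y : EuclideanSpace ℝ (Fin n) =>
        f' (‖y‖ ^ 2) • fderiv ℝ (fun z : EuclideanSpace ℝ (Fin n) => ‖z‖ ^ 2) y) := by
    filter_upwards [hfd] with y hy
    rw [hy, (hq y).fderiv]
  have hcdiff : DifferentiableAt ℝ (fun y : EuclideanSpace ℝ (Fin n) => f' (‖y‖ ^ 2)) x :=
    ((hf2 _ (hQ x hx)).comp_hasFDerivAt x (hq x)).differentiableAt
  have hqdiff : DifferentiableAt ℝ
      (fun y : EuclideanSpace ℝ (Fin n) =>
        fderiv ℝ (fun z : EuclideanSpace ℝ (Fin n) => ‖z‖ ^ 2) y) x := by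
    have := (contDiff_norm_sq ℝ (E := EuclideanSpace ℝ (Fin n)) (n := (2:ℕ∞))).fderiv_right
      (m := 1) (by norm_num)
    exact this.differentiable one_ne_zero |>.differentiableAt
  have hdiff : DifferentiableAt ℝ
      (fderiv ℝ (fun y : EuclideanSpace ℝ (Fin n) => f (‖y‖ ^ 2))) x :=
    (hG.differentiableAt_iff).mpr (hcdiff.smul hqdiff)
  have key : fderiv ℝ (fun y : EuclideanSpace ℝ (Fin n) =>
        fderiv ℝ (fun y : EuclideanSpace ℝ (Fin n) => f (‖y‖ ^ 2)) y (EuclideanSpace.single j 1)) x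
      = (fderiv ℝ (fderiv ℝ (fun y : EuclideanSpace ℝ (Fin n) => f (‖y‖ ^ 2))) x).flip
          (EuclideanSpace.single j 1) := by
    rw [fderiv_clm_apply hdiff (differentiableAt_const _), fderiv_fun_const]
    simp
  have hgj : (fun y : EuclideanSpace ℝ (Fin n) =>
        fderiv ℝ (fun y : EuclideanSpace ℝ (Fin n) => f (‖y‖ ^ 2)) y (EuclideanSpace.single j 1))
      =ᶠ[nhds x] (fun y : EuclideanSpace ℝ (Fin n) => f' (‖y‖ ^ 2) * (2 * y j)) := by
    filter_upwards [hfd] with y hy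
    rw [hy]
    simp [innerSL_apply_apply, EuclideanSpace.inner_single_right, two_smul]
    ring
  have hc : HasFDerivAt (fun y : EuclideanSpace ℝ (Fin n) => f' (‖y‖ ^ 2))
      (f'' (‖x‖ ^ 2) • (2 • (innerSL ℝ x))) x :=
    (hf2 _ (hQ x hx)).comp_hasFDerivAt x (hq x)
  have hd : HasFDerivAt (fun y : EuclideanSpace ℝ (Fin n) => 2 * y j)
      ((2:ℝ) • (EuclideanSpace.proj (𝕜 := ℝ) j)) x :=
    (EuclideanSpace.proj (𝕜 := ℝ) j).hasFDerivAt.const_mul 2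
  have hprod := hc.fun_mul hd
  have hval : fderiv ℝ (fun y : EuclideanSpace ℝ (Fin n) =>
        fderiv ℝ (fun y : EuclideanSpace ℝ (Fin n) => f (‖y‖ ^ 2)) y (EuclideanSpace.single j 1)) x
      (EuclideanSpace.single i 1)
      = 4 * f'' (‖x‖ ^ 2) * x i * x j + (if i = j then 2 * f' (‖x‖ ^ 2) else 0) := by
    rw [hgj.fderiv_eq, hprod.fderiv]
    simp [innerSL_apply_apply, EuclideanSpace.inner_single_right, two_smul,
      EuclideanSpace.single_apply]
    by_cases hij : i = j
    · simp [hij]; ring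
    · simp [hij, Ne.symm hij]; ring
  have h2 : hessianMatrix φ x i j = fderiv ℝ (fderiv ℝ
      (fun y : EuclideanSpace ℝ (Fin n) => f (‖y‖ ^ 2))) x
      (EuclideanSpace.single i 1) (EuclideanSpace.single j 1) := by
    rw [hessianMatrix, iteratedFDeriv_two_apply]
    rw [(hφ.fderiv (𝕜 := ℝ)).fderiv_eq]
    simp
  rw [h2, ← hval, key]
  simp [ContinuousLinearMap.flip_apply]


open Polynomial in
lemma eig_multiset_rankOne {n : ℕ} (hn : 1 ≤ n) (x : EuclideanSpace ℝ (Fin n)) (hx : x ≠ 0)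
    (c d : ℝ) (M : Matrix (Fin n) (Fin n) ℝ)
    (hM : ∀ i j, M i j = c * x i * x j + (if i = j then d else 0)) (hherm : M.IsHermitian) :
    Finset.univ.val.map hherm.eigenvalues
      = Multiset.replicate (n - 1) d + {d + c * ‖x‖ ^ 2} := by
  classical
  set T : ℝ := d + c * ‖x‖ ^ 2 with hT
  set ev : Fin n → ℝ := hherm.eigenvalues with hev
  have hnormsq : ‖x‖ ^ 2 = ∑ i, x i * x i := by
    rw [EuclideanSpace.norm_eq, Real.sq_sqrt (by positivity)]
    exact Finset.sum_congr rfl fun i _ => by rw [Real.norm_eq_abs, sq_abs, sq]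
  have hdet1 : ∀ t : ℝ, (t • (1 : Matrix (Fin n) (Fin n) ℝ) - M).det = ∏ i, (t - ev i) := by
    intro t
    set U : Matrix (Fin n) (Fin n) ℝ := (hherm.eigenvectorUnitary : Matrix (Fin n) (Fin n) ℝ)
    have hU2 : U * star U = 1 := hherm.eigenvectorUnitary.prop.2
    have hD : (Matrix.diagonal (RCLike.ofReal ∘ ev) : Matrix (Fin n) (Fin n) ℝ)
        = Matrix.diagonal ev := by
      rw [RCLike.ofReal_real_eq_id, Function.id_comp]
    have hspec : M = U * Matrix.diagonal ev * star U := by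
      rw [← hD]; exact hherm.spectral_theorem
    have key : t • (1 : Matrix (Fin n) (Fin n) ℝ) - M
        = U * (t • (1 : Matrix (Fin n) (Fin n) ℝ) - Matrix.diagonal ev) * star U := by
      rw [hspec, Matrix.mul_sub, Matrix.sub_mul, Matrix.mul_smul, Matrix.smul_mul,
        Matrix.mul_one, hU2]
    rw [key, Matrix.det_mul, Matrix.det_mul]
    have hUdet : U.det * (star U).det = 1 := by
      rw [← Matrix.det_mul, hU2, Matrix.det_one]
    calc U.det * (t • (1 : Matrix (Fin n) (Fin n) ℝ) - Matrix.diagonal ev).det * (star U).det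
        = (t • (1 : Matrix (Fin n) (Fin n) ℝ) - Matrix.diagonal ev).det
          * (U.det * (star U).det) := by ring
      _ = (t • (1 : Matrix (Fin n) (Fin n) ℝ) - Matrix.diagonal ev).det := by
          rw [hUdet, mul_one]
      _ = ∏ i, (t - ev i) := by
          rw [Matrix.smul_one_eq_diagonal, Matrix.diagonal_sub, Matrix.det_diagonal]
  have hdet2 : ∀ t : ℝ, t ≠ d →
      (t • (1 : Matrix (Fin n) (Fin n) ℝ) - M).det = (t - d) ^ (n - 1) * (t - T) := by
    intro t ht
    have htd : t - d ≠ 0 := sub_ne_zero.mpr ht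
    have key : t • (1 : Matrix (Fin n) (Fin n) ℝ) - M
        = (t - d) • ((1 : Matrix (Fin n) (Fin n) ℝ)
            + Matrix.replicateCol Unit (fun i => (-c / (t - d)) * x i) * Matrix.replicateRow Unit (fun i => x i)) := by
      ext i j
      simp only [Matrix.sub_apply, Matrix.smul_apply, Matrix.one_apply, Matrix.add_apply,
        Matrix.mul_apply, Matrix.replicateCol_apply, Matrix.replicateRow_apply, hM i j, smul_eq_mul,
        Finset.univ_unique, Finset.sum_const, Finset.card_singleton, one_smul]
      by_cases hij : i = j <;> simp [hij] <;> field_simp <;> ring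
    rw [key, Matrix.det_smul, Matrix.det_one_add_replicateCol_mul_replicateRow]
    have hdot : dotProduct (fun i => x i) (fun i => (-c / (t - d)) * x i)
        = (-c / (t - d)) * ‖x‖ ^ 2 := by
      rw [hnormsq, dotProduct, Finset.mul_sum]
      exact Finset.sum_congr rfl fun i _ => by ring
    rw [hdot]
    have hpow : (t - d) ^ (Fintype.card (Fin n)) = (t - d) ^ (n - 1) * (t - d) := by
      rw [Fintype.card_fin, ← pow_succ, Nat.sub_add_cancel hn]
    rw [hpow, hT]
    field_simp
    ring
  have hpoly : (∏ i, (X - C (ev i))) = (X - C d) ^ (n - 1) * (X - C T) := by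
    apply Polynomial.eq_of_infinite_eval_eq
    apply Set.Infinite.mono (s := {d}ᶜ)
    · intro t ht
      have ht' : t ≠ d := ht
      simp only [Set.mem_setOf_eq, eval_prod, eval_mul, eval_pow, eval_sub, eval_X, eval_C]
      rw [← hdet1 t, hdet2 t ht']
    · exact Set.Finite.infinite_compl (Set.finite_singleton d)
  have h1 : (Multiset.map (fun a => X - C a) (Finset.univ.val.map ev)).prod.roots
      = Finset.univ.val.map ev := Polynomial.roots_multiset_prod_X_sub_C _
  rw [Multiset.map_map] at h1
  have h2 : (Multiset.map ((fun a => X - C a) ∘ ev) Finset.univ.val).prod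
      = ∏ i, (X - C (ev i)) := (Finset.prod_eq_multiset_prod _ _).symm
  rw [h2, hpoly] at h1
  rw [← h1, Polynomial.roots_mul, Polynomial.roots_pow, Polynomial.roots_X_sub_C,
    Polynomial.roots_X_sub_C, Multiset.nsmul_singleton]
  exact mul_ne_zero (pow_ne_zero _ (X_sub_C_ne_zero d)) (X_sub_C_ne_zero T)

lemma sortedEig_rankOne {n : ℕ} (hn : 1 ≤ n) (x : EuclideanSpace ℝ (Fin n)) (hx : x ≠ 0)
    (c d : ℝ) (hc : 0 ≤ c) (M : Matrix (Fin n) (Fin n) ℝ)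
    (hM : ∀ i j, M i j = c * x i * x j + (if i = j then d else 0)) :
    ∀ i : Fin n, sortedEig M i = if (i : ℕ) = n - 1 then d + c * ‖x‖ ^ 2 else d := by
  classical
  have hherm : M.IsHermitian := by
    ext i j
    simp only [Matrix.conjTranspose_apply, hM, star_trivial]
    by_cases hij : i = j
    · simp [hij]
    · simp [hij, Ne.symm hij]; ring
  set T : ℝ := d + c * ‖x‖ ^ 2 with hT
  have hdT : d ≤ T := by
    rw [hT]; nlinarith [sq_nonneg ‖x‖, norm_nonneg x]
  set ev : Fin n → ℝ := hherm.eigenvalues with hev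
  have hroots : Finset.univ.val.map ev = Multiset.replicate (n - 1) d + {T} :=
    eig_multiset_rankOne hn x hx c d M hM hherm
  set g : Fin n → ℝ := ev ∘ (Tuple.sort ev) with hg
  have hgmono : Monotone g := Tuple.monotone_sort ev
  have hmapσ : Finset.univ.val.map ⇑(Tuple.sort ev) = Finset.univ.val := by
    conv_rhs => rw [← Finset.map_univ_equiv (Tuple.sort ev)]
    rw [Finset.map_val]
    rfl
  have hgmap : Finset.univ.val.map g = Multiset.replicate (n - 1) d + {T} := by
    rw [hg, ← hroots]
    rw [← Multiset.map_map ev ⇑(Tuple.sort ev), hmapσ]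
  -- the last index
  have hn1 : n - 1 < n := Nat.sub_lt (Nat.lt_of_lt_of_le Nat.zero_lt_one hn) Nat.one_pos
  set last : Fin n := ⟨n - 1, hn1⟩ with hlast
  have hmem : ∀ i : Fin n, g i ∈ Multiset.replicate (n - 1) d + {T} := by
    intro i
    rw [← hgmap]
    exact Multiset.mem_map.mpr ⟨i, by simp, rfl⟩
  have hle : ∀ i : Fin n, g i ≤ T := by
    intro i
    rcases Multiset.mem_add.mp (hmem i) with h | h
    · exact le_trans (le_of_eq (Multiset.eq_of_mem_replicate h)) hdT
    · exact le_of_eq (Multiset.mem_singleton.mp h)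
  have hglast : g last = T := by
    have hTmem : T ∈ Finset.univ.val.map g := by
      rw [hgmap]; exact Multiset.mem_add.mpr (Or.inr (Multiset.mem_singleton_self T))
    obtain ⟨i, -, hi⟩ := Multiset.mem_map.mp hTmem
    have hilast : i ≤ last := by
      rw [hlast, Fin.le_def]
      exact Nat.le_sub_one_of_lt i.isLt
    exact le_antisymm (hle last) (hi ▸ hgmono hilast)
  have herase : (Finset.univ.val.erase last).map g = Multiset.replicate (n - 1) d := by
    have hcons : Finset.univ.val = last ::ₘ Finset.univ.val.erase last :=
      (Multiset.cons_erase (Finset.mem_univ last : last ∈ Finset.univ.val)).symm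
    have : Finset.univ.val.map g = g last ::ₘ (Finset.univ.val.erase last).map g := by
      conv_lhs => rw [hcons]
      rw [Multiset.map_cons]
    rw [hgmap, hglast] at this
    have hrhs : Multiset.replicate (n - 1) d + {T} = T ::ₘ Multiset.replicate (n - 1) d := by
      rw [add_comm, Multiset.singleton_add]
    rw [hrhs] at this
    exact ((Multiset.cons_inj_right T).mp this).symm
  intro i
  have hsg : sortedEig M i = g i := by
    rw [sortedEig, dif_pos hherm]
  by_cases hi : (i : ℕ) = n - 1
  · have : i = last := by rw [hlast]; exact Fin.ext hi
    rw [hsg, this, hglast, hlast, if_pos rfl]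
  · have hine : i ≠ last := fun h => hi (by rw [h])
    have himem : g i ∈ (Finset.univ.val.erase last).map g := by
      exact Multiset.mem_map.mpr ⟨i, (Multiset.mem_erase_of_ne hine).mpr (by simp), rfl⟩
    rw [herase] at himem
    rw [hsg, if_neg hi]
    exact Multiset.eq_of_mem_replicate himem

lemma pucciSupP_sorted {n p : ℕ} (hp : 1 ≤ p) (hpn : p ≤ n) (lam Lam d T : ℝ)
    (hd : d ≤ 0) (hT : 0 ≤ T) (M : Matrix (Fin n) (Fin n) ℝ)
    (hsort : ∀ i : Fin n, sortedEig M i = if (i : ℕ) = n - 1 then T else d) :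
    pucciSupP lam Lam p M = Lam * T + ((p : ℝ) - 1) * (lam * d) := by
  classical
  have hn : 1 ≤ n := le_trans hp hpn
  have hn1 : n - 1 < n := Nat.sub_lt (lt_of_lt_of_le Nat.zero_lt_one hn) Nat.one_pos
  have hnp : n - p < n := Nat.sub_lt_self (lt_of_lt_of_le Nat.zero_lt_one hp) hpn |>.trans_le le_rfl
  set lastI : Fin n := ⟨n - 1, hn1⟩ with hlastI
  set S : Finset (Fin n) := Finset.univ.filter (fun i : Fin n => n - p ≤ (i : ℕ)) with hS
  have hterm : ∀ i : Fin n,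
      (Lam * max (sortedEig M i) 0 - lam * max (-(sortedEig M i)) 0)
        = if i = lastI then Lam * T else lam * d := by
    intro i
    rw [hsort i]
    by_cases hi : (i : ℕ) = n - 1
    · have : i = lastI := Fin.ext hi
      rw [if_pos hi, if_pos this, max_eq_left hT, max_eq_right (neg_nonpos.mpr hT)]
      ring
    · have : i ≠ lastI := fun h => hi (by rw [h])
      rw [if_neg hi, if_neg this, max_eq_right hd, max_eq_left (neg_nonneg.mpr hd)]
      ring
  have hSIci : S = Finset.Ici (⟨n - p, hnp⟩ : Fin n) := by
    ext i
    simp [hS, Finset.mem_Ici, Fin.le_def]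
  have hcard : S.card = p := by
    rw [hSIci, Fin.card_Ici]
    simp [Nat.sub_sub_self hpn]
  have hlastmem : lastI ∈ S := by
    rw [hS, Finset.mem_filter]
    exact ⟨Finset.mem_univ _, Nat.sub_le_sub_left hp n⟩
  rw [pucciSupP]
  have : ∑ i ∈ S, (Lam * max (sortedEig M i) 0 - lam * max (-(sortedEig M i)) 0)
      = ∑ i ∈ S, (if i = lastI then Lam * T else lam * d) :=
    Finset.sum_congr rfl fun i _ => hterm i
  rw [this, ← Finset.add_sum_erase S _ hlastmem, if_pos rfl]
  have herase : ∑ i ∈ S.erase lastI, (if i = lastI then Lam * T else lam * d)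
      = ((p : ℝ) - 1) * (lam * d) := by
    rw [Finset.sum_congr rfl (fun i hi => if_neg (Finset.ne_of_mem_erase hi)),
      Finset.sum_const, Finset.card_erase_of_mem hlastmem, hcard, nsmul_eq_mul,
      Nat.cast_sub hp, Nat.cast_one]
  rw [herase]

/-- fundamental solutions of the degenerate Pucci maximal equation. -/
theorem pucci_fundamental_solutions (n : ℕ) (lam Lam : ℝ) (hlam : 0 < lam)
    (hLam : lam ≤ Lam) (p : ℕ) (hp2 : 2 ≤ p) (hpn : p ≤ n)
    (αs : ℝ) (hαs : αs = lam / Lam * ((p : ℝ) - 1) - 1) :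
    (0 < αs →
      ContDiffOn ℝ 2 (fun x : EuclideanSpace ℝ (Fin n) => ‖x‖ ^ (-αs)) {x : EuclideanSpace ℝ (Fin n) | x ≠ 0} ∧
      ∀ x : EuclideanSpace ℝ (Fin n), x ≠ 0 →
        pucciSupP lam Lam p (hessianMatrix (fun x : EuclideanSpace ℝ (Fin n) => ‖x‖ ^ (-αs)) x) = 0) ∧
    (αs = 0 → ∀ R : ℝ, 0 < R →
      ContDiffOn ℝ 2 (fun x : EuclideanSpace ℝ (Fin n) => Real.log (R / ‖x‖))
        {x : EuclideanSpace ℝ (Fin n) | x ≠ 0 ∧ ‖x‖ < R} ∧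
      (∀ x : EuclideanSpace ℝ (Fin n), x ≠ 0 → ‖x‖ < R → 0 < Real.log (R / ‖x‖)) ∧
      ∀ x : EuclideanSpace ℝ (Fin n), x ≠ 0 → ‖x‖ < R →
        pucciSupP lam Lam p
          (hessianMatrix (fun x : EuclideanSpace ℝ (Fin n) => Real.log (R / ‖x‖)) x) = 0) := by
  have hLam0 : (0:ℝ) < Lam := lt_of_lt_of_le hlam hLam
  have hp1 : 1 ≤ p := le_trans one_le_two hp2
  have hn : 1 ≤ n := le_trans hp1 hpn
  constructor
  · -- case 0 < αs
    intro hα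
    constructor
    · intro x hx
      exact ((Real.contDiffAt_rpow_const_of_ne (norm_ne_zero_iff.mpr hx)).comp x
        (contDiffAt_norm ℝ hx)).contDiffWithinAt
    · intro x hx
      set f : ℝ → ℝ := fun t => t ^ (-αs/2) with hf
      set f' : ℝ → ℝ := fun t => (-αs/2) * t ^ (-αs/2 - 1) with hf'
      set f'' : ℝ → ℝ := fun t => (-αs/2) * ((-αs/2 - 1) * t ^ (-αs/2 - 1 - 1)) with hf''
      have hf1 : ∀ t, 0 < t → HasDerivAt f (f' t) t := fun t ht =>
        Real.hasDerivAt_rpow_const (Or.inl ht.ne')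
      have hf2 : ∀ t, 0 < t → HasDerivAt f' (f'' t) t := fun t ht =>
        (Real.hasDerivAt_rpow_const (Or.inl ht.ne')).const_mul (-αs/2)
      have hφ : (fun y : EuclideanSpace ℝ (Fin n) => ‖y‖ ^ (-αs)) =ᶠ[nhds x]
          fun y => f (‖y‖ ^ 2) := by
        filter_upwards [eventually_ne_nhds hx] with y hy
        rw [hf]
        show ‖y‖ ^ (-αs) = (‖y‖ ^ 2) ^ (-αs/2)
        rw [← Real.rpow_natCast ‖y‖ 2, ← Real.rpow_mul (norm_nonneg y)]
        congr 1
        push_cast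
        ring
      have hM : ∀ i j, hessianMatrix (fun y : EuclideanSpace ℝ (Fin n) => ‖y‖ ^ (-αs)) x i j
          = (4 * f'' (‖x‖ ^ 2)) * x i * x j
            + (if i = j then 2 * f' (‖x‖ ^ 2) else 0) :=
        fun i j => hessian_radial_entry f f' f'' hf1 hf2 _ x hx hφ i j
      set q : ℝ := ‖x‖ ^ 2 with hq
      have hq0 : 0 < q := pow_pos (norm_pos_iff.mpr hx) 2
      set A : ℝ := q ^ (-αs/2 - 1) with hA
      set B : ℝ := q ^ (-αs/2 - 1 - 1) with hB
      have hA0 : 0 < A := Real.rpow_pos_of_pos hq0 _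
      have hB0 : 0 < B := Real.rpow_pos_of_pos hq0 _
      have hBq : B * q = A := by
        rw [hA, hB, ← Real.rpow_add_one hq0.ne' (-αs/2 - 1 - 1)]
        ring_nf
      have hc : 0 ≤ 4 * f'' q := by
        rw [hf'']
        show (0:ℝ) ≤ 4 * ((-αs/2) * ((-αs/2 - 1) * B))
        nlinarith [mul_pos (mul_pos hα hα) hB0, mul_pos hα hB0]
      have hd : 2 * f' q ≤ 0 := by
        rw [hf']
        show 2 * ((-αs/2) * A) ≤ 0
        nlinarith [mul_pos hα hA0]
      have hT : 0 ≤ 2 * f' q + 4 * f'' q * ‖x‖ ^ 2 := by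
        rw [hf', hf'']
        show (0:ℝ) ≤ 2 * ((-αs/2) * A) + 4 * ((-αs/2) * ((-αs/2 - 1) * B)) * q
        nlinarith [hBq, mul_pos (mul_pos hα hα) hA0, mul_pos hα hA0]
      have hsort := sortedEig_rankOne hn x hx (4 * f'' q) (2 * f' q) hc _ hM
      rw [pucciSupP_sorted hp1 hpn lam Lam (2 * f' q) (2 * f' q + 4 * f'' q * ‖x‖ ^ 2)
        hd hT _ hsort]
      have hα1 : Lam * (αs + 1) = lam * ((p : ℝ) - 1) := by
        rw [hαs]; field_simp; ring
      rw [hf', hf'']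
      show Lam * (2 * ((-αs/2) * A) + 4 * ((-αs/2) * ((-αs/2 - 1) * B)) * ‖x‖ ^ 2)
          + ((p:ℝ) - 1) * (lam * (2 * ((-αs/2) * A))) = 0
      rw [← hq]
      linear_combination (αs * A) * hα1 + ((αs^2 + 2*αs) * Lam) * hBq
  · -- case αs = 0
    intro hα0 R hR
    have hΛ : lam * ((p : ℝ) - 1) = Lam := by
      have := hαs.symm.trans hα0
      field_simp at this
      linarith [this]
    refine ⟨?_, ?_, ?_⟩
    · intro x hx
      have hx0 : x ≠ 0 := hx.1
      have hnorm : ‖x‖ ≠ 0 := norm_ne_zero_iff.mpr hx0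
      have hdiv : ContDiffAt ℝ 2 (fun y : EuclideanSpace ℝ (Fin n) => R / ‖y‖) x :=
        contDiffAt_const.div (contDiffAt_norm ℝ hx0) hnorm
      have hne : R / ‖x‖ ≠ 0 := by positivity
      exact ((Real.contDiffAt_log.mpr hne).comp x hdiv).contDiffWithinAt
    · intro x hx hxR
      exact Real.log_pos ((one_lt_div (norm_pos_iff.mpr hx)).mpr hxR)
    · intro x hx hxR
      set f : ℝ → ℝ := fun t => Real.log R - Real.log t / 2 with hf
      set f' : ℝ → ℝ := fun t => -(t⁻¹ / 2) with hf'
      set f'' : ℝ → ℝ := fun t => -(-(t ^ 2)⁻¹ / 2) with hf''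
      have hf1 : ∀ t, 0 < t → HasDerivAt f (f' t) t := fun t ht =>
        ((Real.hasDerivAt_log ht.ne').div_const 2).const_sub (Real.log R)
      have hf2 : ∀ t, 0 < t → HasDerivAt f' (f'' t) t := fun t ht =>
        (((hasDerivAt_inv ht.ne').div_const 2)).neg
      have hφ : (fun y : EuclideanSpace ℝ (Fin n) => Real.log (R / ‖y‖)) =ᶠ[nhds x]
          fun y => f (‖y‖ ^ 2) := by
        filter_upwards [eventually_ne_nhds hx] with y hy
        have hny : ‖y‖ ≠ 0 := norm_ne_zero_iff.mpr hy
        rw [hf]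
        show Real.log (R / ‖y‖) = Real.log R - Real.log (‖y‖ ^ 2) / 2
        rw [Real.log_div hR.ne' hny, Real.log_pow]
        push_cast
        ring
      have hM : ∀ i j, hessianMatrix (fun y : EuclideanSpace ℝ (Fin n) => Real.log (R / ‖y‖)) x i j
          = (4 * f'' (‖x‖ ^ 2)) * x i * x j
            + (if i = j then 2 * f' (‖x‖ ^ 2) else 0) :=
        fun i j => hessian_radial_entry f f' f'' hf1 hf2 _ x hx hφ i j
      set q : ℝ := ‖x‖ ^ 2 with hq
      have hq0 : 0 < q := pow_pos (norm_pos_iff.mpr hx) 2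
      have hc : 0 ≤ 4 * f'' q := by
        rw [hf'']
        show (0:ℝ) ≤ 4 * -(-(q ^ 2)⁻¹ / 2)
        have : 0 < (q ^ 2)⁻¹ := by positivity
        linarith
      have hd : 2 * f' q ≤ 0 := by
        rw [hf']
        show 2 * -(q⁻¹ / 2) ≤ 0
        have : 0 < q⁻¹ := by positivity
        linarith
      have hq'' : (q ^ 2)⁻¹ * q = q⁻¹ := by
        field_simp
      have hT : 0 ≤ 2 * f' q + 4 * f'' q * ‖x‖ ^ 2 := by
        rw [hf', hf'']
        show (0:ℝ) ≤ 2 * -(q⁻¹ / 2) + 4 * -(-(q ^ 2)⁻¹ / 2) * q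
        have h1 : 0 < q⁻¹ := by positivity
        nlinarith [hq'']
      have hsort := sortedEig_rankOne hn x hx (4 * f'' q) (2 * f' q) hc _ hM
      rw [pucciSupP_sorted hp1 hpn lam Lam (2 * f' q) (2 * f' q + 4 * f'' q * ‖x‖ ^ 2)
        hd hT _ hsort]
      rw [hf', hf'']
      show Lam * (2 * -(q⁻¹ / 2) + 4 * -(-(q ^ 2)⁻¹ / 2) * ‖x‖ ^ 2)
          + ((p:ℝ) - 1) * (lam * (2 * -(q⁻¹ / 2))) = 0
      rw [← hq]
      linear_combination (2 * Lam) * hq'' - q⁻¹ * hΛ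

end
end

section
/- Let 0 < λ ≤ Λ, let 1 ≤ p ≤ n be an integer, let δ > 0 and b ≥ 0 satisfy bδ < λp, and let Ω ⊆ B_δ = {|x| < δ} be a bounded domain of ℝⁿ. If u ∈ USC(Ω) is a viscosity subsolution of P⁺_{λ,Λ|p}(D²u) + b|Du| = f(x) in Ω with f : Ω → ℝ continuous, then sup_Ω u ≤ limsup_{y→∂Ω} u(y) + C·‖f⁻‖_∞ with C = δ²/(2(λp − bδ)). -/
open MeasureTheory Metric Filter
open scoped ENNReal

noncomputable section

section AuxLemmas

open InnerProductSpace Set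

variable {n : ℕ}

private lemma hasFDerivAt_phi (a c : ℝ) (x : EuclideanSpace ℝ (Fin n)) :
    HasFDerivAt (fun x : EuclideanSpace ℝ (Fin n) => a + c * ‖x‖^2)
      (((2*c) • innerSL ℝ) x) x := by
  have h := (hasFDerivAt_const a x).add
    (((hasStrictFDerivAt_norm_sq x).hasFDerivAt (𝕜 := ℝ)).const_mul c)
  refine h.congr_fderiv ?_
  ext y
  simp [two_smul]
  ring

private lemma fderiv_phi (a c : ℝ) :
    (fderiv ℝ (fun x : EuclideanSpace ℝ (Fin n) => a + c * ‖x‖^2)) =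
      ⇑((2*c) • innerSL ℝ (E := EuclideanSpace ℝ (Fin n))) := by
  funext x
  exact (hasFDerivAt_phi a c x).fderiv

private lemma gradient_phi (a c : ℝ) (x : EuclideanSpace ℝ (Fin n)) :
    gradient (fun x : EuclideanSpace ℝ (Fin n) => a + c * ‖x‖^2) x = (2*c) • x := by
  unfold gradient
  rw [fderiv_phi]
  apply (toDual ℝ (EuclideanSpace ℝ (Fin n))).injective
  simp only [LinearIsometryEquiv.apply_symm_apply]
  ext y
  simp [toDual_apply_apply, inner_smul_left]

private lemma hessian_phi (a c : ℝ) (x : EuclideanSpace ℝ (Fin n)) :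
    hessianMatrix (fun x : EuclideanSpace ℝ (Fin n) => a + c * ‖x‖^2) x
      = (2*c) • (1 : Matrix (Fin n) (Fin n) ℝ) := by
  funext i j
  simp only [hessianMatrix, iteratedFDeriv_two_apply, fderiv_phi]
  rw [(((2*c) • innerSL ℝ (E := EuclideanSpace ℝ (Fin n))).hasFDerivAt (x := x)).fderiv]
  show ((2*c) • innerSL ℝ (EuclideanSpace.single i 1)) (EuclideanSpace.single j 1) = _
  simp [Matrix.one_apply, EuclideanSpace.inner_single_left, EuclideanSpace.single_apply,
    Matrix.smul_apply]

private lemma contDiff_phi (a c : ℝ) :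
    ContDiff ℝ 2 (fun x : EuclideanSpace ℝ (Fin n) => a + c * ‖x‖^2) :=
  contDiff_const.add (contDiff_const.mul (contDiff_norm_sq ℝ))

private lemma isHermitian_smul_one (r : ℝ) :
    (r • (1 : Matrix (Fin n) (Fin n) ℝ)).IsHermitian := by
  simp [Matrix.IsHermitian, Matrix.conjTranspose_smul]

private lemma eigenvalues_smul_one (r : ℝ)
    (h : (r • (1 : Matrix (Fin n) (Fin n) ℝ)).IsHermitian) (i : Fin n) :
    h.eigenvalues i = r := by
  have hm := h.mulVec_eigenvectorBasis i
  rw [Matrix.smul_mulVec, Matrix.one_mulVec] at hm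
  have hne : (⇑(h.eigenvectorBasis i) : Fin n → ℝ) ≠ 0 := by
    intro h0
    exact h.eigenvectorBasis.orthonormal.ne_zero i (by ext j; exact congrFun h0 j)
  by_contra hne2
  have : (r - h.eigenvalues i) • (⇑(h.eigenvectorBasis i) : Fin n → ℝ) = 0 := by
    rw [sub_smul, hm, sub_self]
  rcases smul_eq_zero.1 this with h1 | h2
  · exact hne2 (by linarith [sub_eq_zero.1 h1])
  · exact hne h2

private lemma sortedEig_smul_one (r : ℝ) (i : Fin n) :
    sortedEig (r • (1 : Matrix (Fin n) (Fin n) ℝ)) i = r := by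
  rw [sortedEig, dif_pos (isHermitian_smul_one r)]
  exact eigenvalues_smul_one r _ _

private lemma card_filter_top (p : ℕ) (hp1 : 1 ≤ p) (hpn : p ≤ n) :
    (Finset.univ.filter (fun i : Fin n => n - p ≤ (i : ℕ))).card = p := by
  have hlt : n - p < n := by omega
  have : (Finset.univ.filter (fun i : Fin n => n - p ≤ (i : ℕ))) =
      Finset.Ici (⟨n - p, hlt⟩ : Fin n) := by
    ext i; simp [Fin.le_def]
  rw [this, Fin.card_Ici]
  show n - (n - p) = p
  omega

private lemma pucciSupP_smul_one (lam Lam : ℝ) (p : ℕ) (hp1 : 1 ≤ p) (hpn : p ≤ n)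
    (r : ℝ) (hr : r ≤ 0) :
    pucciSupP lam Lam p (r • (1 : Matrix (Fin n) (Fin n) ℝ)) = p * (lam * r) := by
  rw [pucciSupP]
  have : ∀ i ∈ Finset.univ.filter (fun i : Fin n => n - p ≤ (i : ℕ)),
      (Lam * max (sortedEig (r • (1 : Matrix (Fin n) (Fin n) ℝ)) i) 0 -
        lam * max (-(sortedEig (r • (1 : Matrix (Fin n) (Fin n) ℝ)) i)) 0) = lam * r := by
    intro i _
    rw [sortedEig_smul_one]
    rw [max_eq_right hr, max_eq_left (by linarith)]
    ring
  rw [Finset.sum_congr rfl this, Finset.sum_const, card_filter_top p hp1 hpn, nsmul_eq_mul]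

private lemma usc_exists_max {α : Type*} [TopologicalSpace α] {s : Set α} (hs : IsCompact s)
    (hne : s.Nonempty) {f : α → ℝ} (hf : UpperSemicontinuousOn f s) :
    ∃ a ∈ s, ∀ x ∈ s, f x ≤ f a := by
  by_contra hcon
  push_neg at hcon
  choose! g hg1 hg2 using hcon
  classical
  have key : ∀ a ∈ s, ∃ U : Set α, U ∈ nhds a ∧ ∀ z ∈ U ∩ s, f z < f (g a) := by
    intro a ha
    have := hf a ha (f (g a)) (hg2 a ha)
    rw [eventually_nhdsWithin_iff] at this
    rcases this.exists_mem with ⟨U, hU, hUs⟩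
    exact ⟨U, hU, fun z hz => hUs z hz.1 hz.2⟩
  choose! U hU1 hU2 using key
  obtain ⟨t, hts, hcover⟩ := hs.elim_nhds_subcover U (fun a ha => hU1 a ha)
  have htne : t.Nonempty := by
    rcases hne with ⟨x, hx⟩
    rcases mem_iUnion₂.1 (hcover hx) with ⟨b, hb, _⟩
    exact ⟨b, hb⟩
  obtain ⟨b₀, hb₀, hmax⟩ := t.exists_max_image (fun a => f (g a)) htne
  have hz : g b₀ ∈ s := hg1 b₀ (hts b₀ hb₀)
  rcases mem_iUnion₂.1 (hcover hz) with ⟨b, hb, hzU⟩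
  have h1 := hU2 b (hts b hb) (g b₀) ⟨hzU, hz⟩
  have h2 := hmax b hb
  linarith

end AuxLemmas

set_option maxHeartbeats 2000000 in
/-- maximum principle for subsolutions of the degenerate maximal equation
when `bδ < λp`. -/

theorem maximum_principle_small_drift (n : ℕ) (lam Lam : ℝ) (hlam : 0 < lam)
    (hLam : lam ≤ Lam) (p : ℕ) (hp1 : 1 ≤ p) (hpn : p ≤ n)
    (δ b : ℝ) (hδ : 0 < δ) (hb : 0 ≤ b) (hbδ : b * δ < lam * p)
    (Ω : Set (EuclideanSpace ℝ (Fin n))) (hΩo : IsOpen Ω) (hΩconn : IsConnected Ω)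
    (hΩsub : Ω ⊆ ball (0 : EuclideanSpace ℝ (Fin n)) δ)
    (u f : EuclideanSpace ℝ (Fin n) → ℝ) (hu : UpperSemicontinuousOn u Ω) (hf : ContinuousOn f Ω)
    (hsub : IsViscositySubsolution Ω
      (fun _ ξ X => pucciSupP lam Lam p X + b * ‖ξ‖) u f)
    (M K : ℝ) (hK0 : 0 ≤ K) (hfK : ∀ x ∈ Ω, max (-f x) 0 ≤ K)
    (hM : ∀ x ∈ frontier Ω, ∀ ε > 0, ∀ᶠ y in nhdsWithin x Ω, u y ≤ M + ε) :
    ∀ x ∈ Ω, u x ≤ M + δ ^ 2 / (2 * (lam * p - b * δ)) * K := by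
  have hD : (0:ℝ) < lam * (p:ℝ) - b * δ := sub_pos.2 hbδ
  intro x hx
  -- key estimate for every ε > 0
  have key : ∀ ε > (0:ℝ), ∀ y ∈ Ω,
      u y ≤ M + ε + (K + ε) / (2 * (lam * (p:ℝ) - b * δ)) * δ ^ 2 := by
    intro ε hε
    by_contra hcon
    push_neg at hcon
    obtain ⟨y, hyΩ, hy⟩ := hcon
    set c : ℝ := (K + ε) / (2 * (lam * (p:ℝ) - b * δ)) with hc
    have hcpos : 0 < c := by
      apply div_pos (by linarith) (by linarith)
    set a : ℝ := M + ε + c * δ ^ 2 with ha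
    set φ : EuclideanSpace ℝ (Fin n) → ℝ := fun z => a + (-c) * ‖z‖ ^ 2 with hφ
    set v : EuclideanSpace ℝ (Fin n) → ℝ := fun z => u z - φ z with hv
    have hφbound : ∀ z ∈ Ω, M + ε ≤ φ z := by
      intro z hz
      have hzδ : ‖z‖ < δ := mem_ball_zero_iff.1 (hΩsub hz)
      have : ‖z‖ ^ 2 ≤ δ ^ 2 := by nlinarith [norm_nonneg z]
      have hφz : φ z = a + -c * ‖z‖ ^ 2 := rfl
      rw [hφz, ha]
      nlinarith
    have hvy : 0 < v y := by
      have hφy : φ y = a + -c * ‖y‖ ^ 2 := rfl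
      have hvy' : v y = u y - φ y := rfl
      have h0 : φ y ≤ a := by
        rw [hφy]; nlinarith [sq_nonneg ‖y‖]
      have h1 : a < u y := hy
      linarith
    set T : Set (EuclideanSpace ℝ (Fin n)) := {z | z ∈ Ω ∧ v y ≤ v z} with hT
    have hyT : y ∈ T := ⟨hyΩ, le_refl _⟩
    have hTsub : T ⊆ Ω := fun z hz => hz.1
    -- closure of T is contained in Ω
    have hclos : closure T ⊆ Ω := by
      intro z hz
      by_cases hzΩ : z ∈ Ω
      · exact hzΩ
      exfalso
      have hzfr : z ∈ frontier Ω := by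
        constructor
        · exact closure_mono hTsub hz
        · rwa [hΩo.interior_eq]
      have hev := hM z hzfr (ε/2) (by linarith)
      have hev' : ∀ᶠ w in nhdsWithin z T, u w ≤ M + ε/2 :=
        hev.filter_mono (nhdsWithin_mono z hTsub)
      have hne : (nhdsWithin z T).NeBot := mem_closure_iff_nhdsWithin_neBot.1 hz
      obtain ⟨w, hw1, hw2⟩ := (hev'.and self_mem_nhdsWithin).exists
      have hwT : w ∈ T := hw2
      have hwΩ : w ∈ Ω := hwT.1
      have h1 : M + ε ≤ φ w := hφbound w hwΩ
      have h2 : v y ≤ v w := hwT.2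
      have hφw : φ w = a + -c * ‖w‖ ^ 2 := rfl
      have hvw : v w = u w - φ w := rfl
      have hvy' : v y = u y - φ y := rfl
      linarith
    have hTcpt : IsCompact (closure T) :=
      (isCompact_closedBall (0 : EuclideanSpace ℝ (Fin n)) δ).of_isClosed_subset
        isClosed_closure
        (closure_minimal (fun z hz => ball_subset_closedBall (hΩsub (hTsub hz)))
          Metric.isClosed_closedBall)
    have husc : UpperSemicontinuousOn v (closure T) := by
      have h1 : UpperSemicontinuousOn u (closure T) := hu.mono hclos
      have h2 : UpperSemicontinuousOn (fun z => -φ z) (closure T) :=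
        ((contDiff_phi a (-c)).continuous.neg.continuousOn).upperSemicontinuousOn
      have h3 := h1.add h2
      have : (fun z => u z + -φ z) = v := by
        funext z; show u z + -φ z = u z - φ z; ring
      rwa [this] at h3
    obtain ⟨xb, hxbmem, hxbmax⟩ := usc_exists_max hTcpt ⟨y, subset_closure hyT⟩ husc
    have hxbΩ : xb ∈ Ω := hclos hxbmem
    have hvxb : v y ≤ v xb := hxbmax y (subset_closure hyT)
    have hglobal : ∀ z ∈ Ω, v z ≤ v xb := by
      intro z hz
      by_cases h : v y ≤ v z
      · exact hxbmax z (subset_closure ⟨hz, h⟩)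
      · linarith [not_le.1 h]
    have hlocmax : IsLocalMaxOn (fun z => u z - φ z) Ω xb :=
      eventually_nhdsWithin_of_forall (fun z hz => hglobal z hz)
    have happ := hsub xb hxbΩ φ (contDiff_phi a (-c)) hlocmax
    simp only [hφ] at happ
    rw [gradient_phi a (-c) xb, hessian_phi a (-c) xb] at happ
    rw [pucciSupP_smul_one lam Lam p hp1 hpn (2 * -c) (by linarith)] at happ
    have hnorm : ‖(2 * -c) • xb‖ = 2 * c * ‖xb‖ := by
      rw [norm_smul, Real.norm_eq_abs, abs_of_nonpos (by linarith)]
      ring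
    rw [hnorm] at happ
    have hxbδ : ‖xb‖ ≤ δ := le_of_lt (mem_ball_zero_iff.1 (hΩsub hxbΩ))
    have hfKx : -f xb ≤ K := le_trans (le_max_left _ _) (hfK xb hxbΩ)
    have h2D : (2 * (lam * (p:ℝ) - b * δ)) ≠ 0 := by positivity
    have h2cD : 2 * c * (lam * (p:ℝ) - b * δ) = K + ε := by
      rw [hc]
      field_simp
    have hbx : b * (2 * c * ‖xb‖) ≤ 2 * c * (b * δ) := by
      nlinarith [mul_nonneg (mul_nonneg (by linarith : (0:ℝ) ≤ 2 * c) hb)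
        (sub_nonneg.2 hxbδ)]
    nlinarith [happ, h2cD, hbx, hfKx, hε]
  -- pass to the limit ε → 0
  by_contra hcon
  push_neg at hcon
  set A : ℝ := 1 + δ ^ 2 / (2 * (lam * (p:ℝ) - b * δ)) with hA
  have hApos : 0 < A := by
    have : 0 ≤ δ ^ 2 / (2 * (lam * (p:ℝ) - b * δ)) :=
      div_nonneg (sq_nonneg δ) (by linarith)
    simp only [hA]; linarith
  set ε : ℝ := (u x - (M + δ ^ 2 / (2 * (lam * (p:ℝ) - b * δ)) * K)) / (2 * A) with hεdef
  have hεpos : 0 < ε := div_pos (by linarith [hcon]) (by linarith)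
  have := key ε hεpos x hx
  have heq : M + ε + (K + ε) / (2 * (lam * (p:ℝ) - b * δ)) * δ ^ 2 =
      M + δ ^ 2 / (2 * (lam * (p:ℝ) - b * δ)) * K + ε * A := by
    have h2D : (2 * (lam * (p:ℝ) - b * δ)) ≠ 0 := by positivity
    simp only [hA]
    field_simp
    ring
  rw [heq] at this
  have hεA : ε * A = (u x - (M + δ ^ 2 / (2 * (lam * (p:ℝ) - b * δ)) * K)) / 2 := by
    rw [hεdef]
    field_simp
  rw [hεA] at this
  linarith


end
end
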